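/- arXiv:2305.17572 — 3 statements merged into one kernel-verified Lean document; each statement's English description precedes it below -/
import Mathlib

section
/- L'Hospital's monotone rule for regulated functions: Let f, g be regulated on (a,b), α strictly increasing, with D_α f and D_α g existing everywhere and D_α g of constant sign on (a,b). Assume lim_{x↑b} f^-(x) = lim_{x↑b} g^-(x) = 0 or lim_{x↓a} f^-(x) = lim_{x↓a} g^-(x) = 0. If (D_α f)/(D_α g) is increasing on (a,b), then f^- /g^- is increasing on (a,b); if (D_α f)/(D_α g) is strictly increasing, then f^- /g^- is strictly increasing. -/
open Filter Topology Function Set MeasureTheory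

/-- `x` lies in the interval `(a, b)` with extended-real endpoints. -/
def MemI (a b : EReal) (x : ℝ) : Prop := a < (x : EReal) ∧ (x : EReal) < b

/-- `f` is regulated on `(a, b)`: both one-sided limits exist (as real numbers)
at every point of `(a, b)`. -/
def RegulatedOn' (f : ℝ → ℝ) (a b : EReal) : Prop :=
  ∀ x : ℝ, MemI a b x →
    (∃ L : ℝ, Tendsto f (𝓝[<] x) (𝓝 L)) ∧ ∃ R : ℝ, Tendsto f (𝓝[>] x) (𝓝 R)

/-- The symmetric `α`-derivative of `f` at `x` equals `A`:
`(D_α f)(x) = lim_{h↓0} (f⁻(x+h) - f⁺(x-h)) / (α⁻(x+h) - α⁺(x-h))`. -/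
def HasDerivAlpha (f α : ℝ → ℝ) (x A : ℝ) : Prop :=
  Tendsto (fun h : ℝ =>
      (leftLim f (x + h) - rightLim f (x - h)) /
        (leftLim α (x + h) - rightLim α (x - h)))
    (𝓝[>] (0 : ℝ)) (𝓝 A)

/-- The filter of real numbers approaching `b : EReal` from the left (`x ↑ b`). -/
noncomputable def leftFilter (b : EReal) : Filter ℝ := comap (fun x : ℝ => (x : EReal)) (𝓝[<] b)

/-- The filter of real numbers approaching `a : EReal` from the right (`x ↓ a`). -/
noncomputable def rightFilter (a : EReal) : Filter ℝ := comap (fun x : ℝ => (x : EReal)) (𝓝[>] a)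

section Aux

variable {a b : EReal} {f g α u v : ℝ → ℝ}

lemma ereal_btwn {c d : EReal} (h : c < d) : ∃ r : ℝ, c < (r : EReal) ∧ (r : EReal) < d := by
  obtain ⟨e, h1, h2⟩ := exists_between h
  have hbot : e ≠ ⊥ := fun h' => not_lt_bot (h' ▸ h1)
  have htop : e ≠ ⊤ := fun h' => not_top_lt (h' ▸ h2)
  refine ⟨e.toReal, ?_, ?_⟩ <;> rw [EReal.coe_toReal htop hbot] <;> assumption

lemma MemI.of_between {x y z : ℝ} (hx : MemI a b x) (hy : MemI a b y)
    (h1 : x ≤ z) (h2 : z ≤ y) : MemI a b z :=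
  ⟨lt_of_lt_of_le hx.1 (by exact_mod_cast h1), lt_of_le_of_lt (by exact_mod_cast h2) hy.2⟩

lemma exists_lt_memI {x : ℝ} (hx : MemI a b x) : ∃ p : ℝ, p < x ∧ MemI a b p := by
  obtain ⟨r, h1, h2⟩ := ereal_btwn hx.1
  exact ⟨r, by exact_mod_cast h2, ⟨h1, h2.trans hx.2⟩⟩

lemma exists_gt_memI {x : ℝ} (hx : MemI a b x) : ∃ q : ℝ, x < q ∧ MemI a b q := by
  obtain ⟨r, h1, h2⟩ := ereal_btwn hx.2
  exact ⟨r, by exact_mod_cast h1, ⟨hx.1.trans h1, h2⟩⟩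

end Aux
section Aux2

variable {a b : EReal} {u : ℝ → ℝ}

lemma leftLim_tendsto' (hu : RegulatedOn' u a b) {z : ℝ} (hz : MemI a b z) :
    Tendsto u (𝓝[<] z) (𝓝 (leftLim u z)) := by
  obtain ⟨L, hL⟩ := (hu z hz).1
  rwa [leftLim_eq_of_tendsto hL]

lemma rightLim_tendsto' (hu : RegulatedOn' u a b) {z : ℝ} (hz : MemI a b z) :
    Tendsto u (𝓝[>] z) (𝓝 (rightLim u z)) := by
  obtain ⟨R, hR⟩ := (hu z hz).2
  rwa [rightLim_eq_of_tendsto hR]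

lemma dist_le_of_tendsto' {w : ℝ → ℝ} {L M ε : ℝ} {m : Filter ℝ} [m.NeBot]
    (hM : Tendsto w m (𝓝 M)) (h : ∀ᶠ t in m, dist (w t) L ≤ ε) : dist M L ≤ ε := by
  have : M ∈ Metric.closedBall L ε :=
    Metric.isClosed_closedBall.mem_of_tendsto hM (h.mono fun t ht => ht)
  exact this

/-- (a) left limits of `u` tend to `leftLim u z` from the left. -/
lemma tendsto_leftLim_Iio (hu : RegulatedOn' u a b) {z : ℝ} (hz : MemI a b z) :
    Tendsto (leftLim u) (𝓝[<] z) (𝓝 (leftLim u z)) := by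
  obtain ⟨p, hpz, hp⟩ := exists_lt_memI hz
  rw [Metric.tendsto_nhdsWithin_nhds]
  intro ε hε
  have hL := leftLim_tendsto' hu hz
  rw [Metric.tendsto_nhdsWithin_nhds] at hL
  obtain ⟨δ0, hδ0, hδ⟩ := hL (ε/2) (by positivity)
  refine ⟨min δ0 (z - p), lt_min hδ0 (by linarith), ?_⟩
  intro s hs hds
  have hsz : s < z := hs
  have hds' : z - s < min δ0 (z - p) := by
    rw [Real.dist_eq, abs_of_neg (by linarith : s - z < 0)] at hds; linarith
  have hsp : p < s := by
    have := lt_of_lt_of_le hds' (min_le_right _ _); linarith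
  have hsI : MemI a b s := hp.of_between hz hsp.le hsz.le
  have hM := leftLim_tendsto' hu hsI
  have hev : ∀ᶠ t in 𝓝[<] s, dist (u t) (leftLim u z) ≤ ε/2 := by
    have hmem : Ioo (z - δ0) s ∈ 𝓝[<] s := Ioo_mem_nhdsLT
      (by have := lt_of_lt_of_le hds' (min_le_left _ _); linarith)
    filter_upwards [hmem] with t ht
    exact le_of_lt (hδ (show t < z by linarith [ht.2])
      (by rw [Real.dist_eq, abs_of_neg (by linarith [ht.2] : t - z < 0)]; linarith [ht.1]))
  have := dist_le_of_tendsto' hM hev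
  linarith [this]

/-- (b) right limits of `u` tend to `leftLim u z` from the left. -/
lemma tendsto_rightLim_Iio (hu : RegulatedOn' u a b) {z : ℝ} (hz : MemI a b z) :
    Tendsto (rightLim u) (𝓝[<] z) (𝓝 (leftLim u z)) := by
  obtain ⟨p, hpz, hp⟩ := exists_lt_memI hz
  rw [Metric.tendsto_nhdsWithin_nhds]
  intro ε hε
  have hL := leftLim_tendsto' hu hz
  rw [Metric.tendsto_nhdsWithin_nhds] at hL
  obtain ⟨δ0, hδ0, hδ⟩ := hL (ε/2) (by positivity)
  refine ⟨min δ0 (z - p), lt_min hδ0 (by linarith), ?_⟩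
  intro s hs hds
  have hsz : s < z := hs
  have hds' : z - s < min δ0 (z - p) := by
    rw [Real.dist_eq, abs_of_neg (by linarith : s - z < 0)] at hds; linarith
  have hsp : p < s := by
    have := lt_of_lt_of_le hds' (min_le_right _ _); linarith
  have hsI : MemI a b s := hp.of_between hz hsp.le hsz.le
  have hM := rightLim_tendsto' hu hsI
  have hev : ∀ᶠ t in 𝓝[>] s, dist (u t) (leftLim u z) ≤ ε/2 := by
    have hmem : Ioo s z ∈ 𝓝[>] s := Ioo_mem_nhdsGT hsz
    filter_upwards [hmem] with t ht
    refine le_of_lt (hδ ht.2 ?_)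
    rw [Real.dist_eq, abs_of_neg (by linarith [ht.2] : t - z < 0)]
    have := lt_of_lt_of_le hds' (min_le_left _ _)
    linarith [ht.1]
  have := dist_le_of_tendsto' hM hev
  linarith [this]

/-- (c) left limits of `u` tend to `rightLim u z` from the right. -/
lemma tendsto_leftLim_Ioi (hu : RegulatedOn' u a b) {z : ℝ} (hz : MemI a b z) :
    Tendsto (leftLim u) (𝓝[>] z) (𝓝 (rightLim u z)) := by
  obtain ⟨q, hzq, hq⟩ := exists_gt_memI hz
  rw [Metric.tendsto_nhdsWithin_nhds]
  intro ε hε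
  have hR := rightLim_tendsto' hu hz
  rw [Metric.tendsto_nhdsWithin_nhds] at hR
  obtain ⟨δ0, hδ0, hδ⟩ := hR (ε/2) (by positivity)
  refine ⟨min δ0 (q - z), lt_min hδ0 (by linarith), ?_⟩
  intro s hs hds
  have hzs : z < s := hs
  have hds' : s - z < min δ0 (q - z) := by
    rw [Real.dist_eq, abs_of_pos (by linarith : (0:ℝ) < s - z)] at hds; linarith
  have hsq : s < q := by
    have := lt_of_lt_of_le hds' (min_le_right _ _); linarith
  have hsI : MemI a b s := hz.of_between hq hzs.le hsq.le
  have hM := leftLim_tendsto' hu hsI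
  have hev : ∀ᶠ t in 𝓝[<] s, dist (u t) (rightLim u z) ≤ ε/2 := by
    have hmem : Ioo z s ∈ 𝓝[<] s := Ioo_mem_nhdsLT hzs
    filter_upwards [hmem] with t ht
    refine le_of_lt (hδ ht.1 ?_)
    rw [Real.dist_eq, abs_of_pos (by linarith [ht.1] : (0:ℝ) < t - z)]
    have := lt_of_lt_of_le hds' (min_le_left _ _)
    linarith [ht.2]
  have := dist_le_of_tendsto' hM hev
  linarith [this]

/-- (d) right limits of `u` tend to `rightLim u z` from the right. -/
lemma tendsto_rightLim_Ioi (hu : RegulatedOn' u a b) {z : ℝ} (hz : MemI a b z) :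
    Tendsto (rightLim u) (𝓝[>] z) (𝓝 (rightLim u z)) := by
  obtain ⟨q, hzq, hq⟩ := exists_gt_memI hz
  rw [Metric.tendsto_nhdsWithin_nhds]
  intro ε hε
  have hR := rightLim_tendsto' hu hz
  rw [Metric.tendsto_nhdsWithin_nhds] at hR
  obtain ⟨δ0, hδ0, hδ⟩ := hR (ε/2) (by positivity)
  refine ⟨min δ0 (q - z), lt_min hδ0 (by linarith), ?_⟩
  intro s hs hds
  have hzs : z < s := hs
  have hds' : s - z < min δ0 (q - z) := by
    rw [Real.dist_eq, abs_of_pos (by linarith : (0:ℝ) < s - z)] at hds; linarith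
  have hsq : s < q := by
    have := lt_of_lt_of_le hds' (min_le_right _ _); linarith
  have hsI : MemI a b s := hz.of_between hq hzs.le hsq.le
  have hM := rightLim_tendsto' hu hsI
  have hev : ∀ᶠ t in 𝓝[>] s, dist (u t) (rightLim u z) ≤ ε/2 := by
    have hδ0s : s < z + δ0 := by
      have := lt_of_lt_of_le hds' (min_le_left _ _); linarith
    have hmem : Ioo s (z + δ0) ∈ 𝓝[>] s := Ioo_mem_nhdsGT hδ0s
    filter_upwards [hmem] with t ht
    refine le_of_lt (hδ (by linarith [ht.1] : z < t) ?_)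
    rw [Real.dist_eq, abs_of_pos (by linarith [ht.1] : (0:ℝ) < t - z)]
    linarith [ht.2]
  have := dist_le_of_tendsto' hM hev
  linarith [this]

end Aux2
section Aux3

variable {a b : EReal} {u v α : ℝ → ℝ}

lemma regulated_alpha (hα : StrictMonoOn α {x : ℝ | MemI a b x}) : RegulatedOn' α a b := by
  intro z hz
  obtain ⟨p, hpz, hp⟩ := exists_lt_memI hz
  obtain ⟨q, hzq, hq⟩ := exists_gt_memI hz
  constructor
  · refine ⟨sSup (α '' Ioo p z), MonotoneOn.tendsto_nhdsWithin_Ioo_left ⟨(p+z)/2, by constructor <;> linarith⟩ ?_ ?_⟩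
    · intro s hs t ht hst
      exact hα.monotoneOn (hp.of_between hz hs.1.le hs.2.le) (hp.of_between hz ht.1.le ht.2.le) hst
    · refine ⟨α z, ?_⟩
      rintro w ⟨t, ht, rfl⟩
      exact hα.monotoneOn (hp.of_between hz ht.1.le ht.2.le) hz ht.2.le
  · refine ⟨sInf (α '' Ioo z q), MonotoneOn.tendsto_nhdsWithin_Ioo_right ⟨(z+q)/2, by constructor <;> linarith⟩ ?_ ?_⟩
    · intro s hs t ht hst
      exact hα.monotoneOn (hz.of_between hq hs.1.le hs.2.le) (hz.of_between hq ht.1.le ht.2.le) hst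
    · refine ⟨α z, ?_⟩
      rintro w ⟨t, ht, rfl⟩
      exact hα.monotoneOn hz (hz.of_between hq ht.1.le ht.2.le) ht.1.le

lemma leftLim_le_self (hα : StrictMonoOn α {x : ℝ | MemI a b x}) {z : ℝ} (hz : MemI a b z) :
    leftLim α z ≤ α z := by
  obtain ⟨p, hpz, hp⟩ := exists_lt_memI hz
  refine le_of_tendsto (leftLim_tendsto' (regulated_alpha hα) hz) ?_
  filter_upwards [Ioo_mem_nhdsLT hpz] with t ht
  exact hα.monotoneOn (hp.of_between hz ht.1.le ht.2.le) hz ht.2.le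

lemma self_le_rightLim (hα : StrictMonoOn α {x : ℝ | MemI a b x}) {z : ℝ} (hz : MemI a b z) :
    α z ≤ rightLim α z := by
  obtain ⟨q, hzq, hq⟩ := exists_gt_memI hz
  refine ge_of_tendsto (rightLim_tendsto' (regulated_alpha hα) hz) ?_
  filter_upwards [Ioo_mem_nhdsGT hzq] with t ht
  exact hα.monotoneOn hz (hz.of_between hq ht.1.le ht.2.le) ht.1.le

lemma alpha_jump_nonneg (hα : StrictMonoOn α {x : ℝ | MemI a b x}) {z : ℝ} (hz : MemI a b z) :
    leftLim α z ≤ rightLim α z := (leftLim_le_self hα hz).trans (self_le_rightLim hα hz)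

lemma rightLim_lt_leftLim (hα : StrictMonoOn α {x : ℝ | MemI a b x}) {z w : ℝ}
    (hz : MemI a b z) (hw : MemI a b w) (hzw : z < w) : rightLim α z < leftLim α w := by
  set m1 := z + (w - z)/3
  set m2 := z + 2*(w - z)/3
  have hm1 : MemI a b m1 := hz.of_between hw (by unfold m1; linarith) (by unfold m1; linarith)
  have hm2 : MemI a b m2 := hz.of_between hw (by unfold m2; linarith) (by unfold m2; linarith)
  have h1 : rightLim α z ≤ α m1 := by
    refine le_of_tendsto (rightLim_tendsto' (regulated_alpha hα) hz) ?_
    filter_upwards [Ioo_mem_nhdsGT (show z < m1 by unfold m1; linarith)] with t ht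
    exact hα.monotoneOn (hz.of_between hm1 ht.1.le ht.2.le) hm1 ht.2.le
  have h2 : α m1 < α m2 := hα hm1 hm2 (by unfold m1 m2; linarith)
  have h3 : α m2 ≤ leftLim α w := by
    refine ge_of_tendsto (leftLim_tendsto' (regulated_alpha hα) hw) ?_
    filter_upwards [Ioo_mem_nhdsLT (show m2 < w by unfold m2; linarith)] with t ht
    exact hα.monotoneOn hm2 (hm2.of_between hw ht.1.le ht.2.le) ht.1.le
  linarith

lemma tendsto_sub_right (z : ℝ) : Tendsto (fun η : ℝ => z - η) (𝓝[>] (0:ℝ)) (𝓝[<] z) := by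
  rw [tendsto_nhdsWithin_iff]
  constructor
  · have : Tendsto (fun η : ℝ => z - η) (𝓝 (0:ℝ)) (𝓝 (z - 0)) :=
      (continuous_const.sub continuous_id).tendsto 0
    simpa using this.mono_left nhdsWithin_le_nhds
  · filter_upwards [self_mem_nhdsWithin] with η (hη : (0:ℝ) < η)
    show z - η ∈ Iio z
    simp only [mem_Iio]
    linarith

lemma tendsto_add_right (z : ℝ) : Tendsto (fun η : ℝ => z + η) (𝓝[>] (0:ℝ)) (𝓝[>] z) := by
  rw [tendsto_nhdsWithin_iff]
  constructor
  · have : Tendsto (fun η : ℝ => z + η) (𝓝 (0:ℝ)) (𝓝 (z + 0)) :=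
      (continuous_const.add continuous_id).tendsto 0
    simpa using this.mono_left nhdsWithin_le_nhds
  · filter_upwards [self_mem_nhdsWithin] with η (hη : (0:ℝ) < η)
    show z + η ∈ Ioi z
    simp only [mem_Ioi]
    linarith

lemma eventually_memI_delta {z : ℝ} (hz : MemI a b z) :
    ∀ᶠ η in 𝓝[>] (0:ℝ), MemI a b (z - η) ∧ MemI a b (z + η) := by
  obtain ⟨p, hpz, hp⟩ := exists_lt_memI hz
  obtain ⟨q, hzq, hq⟩ := exists_gt_memI hz
  filter_upwards [Ioo_mem_nhdsGT (show (0:ℝ) < min (z - p) (q - z) by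
    simp only [lt_min_iff]; constructor <;> linarith)] with η hη
  have h1 := lt_of_lt_of_le hη.2 (min_le_left _ _)
  have h2 := lt_of_lt_of_le hη.2 (min_le_right _ _)
  exact ⟨hp.of_between hz (by linarith) (by linarith [hη.1]),
    hz.of_between hq (by linarith [hη.1]) (by linarith)⟩

lemma eventually_denom_pos (hα : StrictMonoOn α {x : ℝ | MemI a b x}) {z : ℝ} (hz : MemI a b z) :
    ∀ᶠ η in 𝓝[>] (0:ℝ), 0 < leftLim α (z + η) - rightLim α (z - η) := by
  filter_upwards [eventually_memI_delta hz, self_mem_nhdsWithin] with η hη (hη0 : (0:ℝ) < η)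
  have := rightLim_lt_leftLim hα hη.1 hη.2 (by linarith)
  linarith

/-- the jump relation: `u⁺(z) - u⁻(z) = A * (α⁺(z) - α⁻(z))`. -/
lemma jump_eq (hα : StrictMonoOn α {x : ℝ | MemI a b x}) (hu : RegulatedOn' u a b)
    {z A : ℝ} (hz : MemI a b z) (hd : HasDerivAlpha u α z A) :
    rightLim u z - leftLim u z = A * (rightLim α z - leftLim α z) := by
  have hnu : Tendsto (fun η => leftLim u (z + η) - rightLim u (z - η)) (𝓝[>] (0:ℝ))
      (𝓝 (rightLim u z - leftLim u z)) :=
    ((tendsto_leftLim_Ioi hu hz).comp (tendsto_add_right z)).sub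
      ((tendsto_rightLim_Iio hu hz).comp (tendsto_sub_right z))
  have hna : Tendsto (fun η => leftLim α (z + η) - rightLim α (z - η)) (𝓝[>] (0:ℝ))
      (𝓝 (rightLim α z - leftLim α z)) :=
    ((tendsto_leftLim_Ioi (regulated_alpha hα) hz).comp (tendsto_add_right z)).sub
      ((tendsto_rightLim_Iio (regulated_alpha hα) hz).comp (tendsto_sub_right z))
  have hmul : Tendsto (fun η =>
      (leftLim u (z + η) - rightLim u (z - η)) /
        (leftLim α (z + η) - rightLim α (z - η)) *
      (leftLim α (z + η) - rightLim α (z - η))) (𝓝[>] (0:ℝ))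
      (𝓝 (A * (rightLim α z - leftLim α z))) := hd.mul hna
  have heq : (fun η =>
      (leftLim u (z + η) - rightLim u (z - η)) /
        (leftLim α (z + η) - rightLim α (z - η)) *
      (leftLim α (z + η) - rightLim α (z - η))) =ᶠ[𝓝[>] (0:ℝ)]
      (fun η => leftLim u (z + η) - rightLim u (z - η)) := by
    filter_upwards [eventually_denom_pos hα hz] with η hη
    exact div_mul_cancel₀ _ (ne_of_gt hη)
  have h2 : Tendsto (fun η => leftLim u (z + η) - rightLim u (z - η)) (𝓝[>] (0:ℝ))
      (𝓝 (A * (rightLim α z - leftLim α z))) := hmul.congr' heq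
  exact tendsto_nhds_unique hnu h2

end Aux3
section Aux4

variable {a b : EReal} {u v α : ℝ → ℝ}

lemma regulated_comb (hu : RegulatedOn' u a b) (hv : RegulatedOn' v a b) (c1 c2 : ℝ) :
    RegulatedOn' (fun t => c1 * u t + c2 * v t) a b := by
  intro z hz
  obtain ⟨⟨L1, hL1⟩, ⟨R1, hR1⟩⟩ := hu z hz
  obtain ⟨⟨L2, hL2⟩, ⟨R2, hR2⟩⟩ := hv z hz
  exact ⟨⟨c1 * L1 + c2 * L2, (hL1.const_mul c1).add (hL2.const_mul c2)⟩,
    ⟨c1 * R1 + c2 * R2, (hR1.const_mul c1).add (hR2.const_mul c2)⟩⟩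

lemma leftLim_comb (hu : RegulatedOn' u a b) (hv : RegulatedOn' v a b) {z : ℝ}
    (hz : MemI a b z) (c1 c2 : ℝ) :
    leftLim (fun t => c1 * u t + c2 * v t) z = c1 * leftLim u z + c2 * leftLim v z :=
  leftLim_eq_of_tendsto
    (((leftLim_tendsto' hu hz).const_mul c1).add ((leftLim_tendsto' hv hz).const_mul c2))

lemma rightLim_comb (hu : RegulatedOn' u a b) (hv : RegulatedOn' v a b) {z : ℝ}
    (hz : MemI a b z) (c1 c2 : ℝ) :
    rightLim (fun t => c1 * u t + c2 * v t) z = c1 * rightLim u z + c2 * rightLim v z :=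
  rightLim_eq_of_tendsto
    (((rightLim_tendsto' hu hz).const_mul c1).add ((rightLim_tendsto' hv hz).const_mul c2))

lemma hasDeriv_comb (hu : RegulatedOn' u a b) (hv : RegulatedOn' v a b) {z A B : ℝ}
    (hz : MemI a b z) (hdu : HasDerivAlpha u α z A) (hdv : HasDerivAlpha v α z B) (c1 c2 : ℝ) :
    HasDerivAlpha (fun t => c1 * u t + c2 * v t) α z (c1 * A + c2 * B) := by
  have h := (hdu.const_mul c1).add (hdv.const_mul c2)
  refine Tendsto.congr' ?_ h
  filter_upwards [eventually_memI_delta hz] with η hη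
  rw [leftLim_comb hu hv hη.2, rightLim_comb hu hv hη.1]
  set D := leftLim α (z + η) - rightLim α (z - η)
  set Nu := leftLim u (z + η) - rightLim u (z - η)
  set Nv := leftLim v (z + η) - rightLim v (z - η)
  show c1 * (Nu / D) + c2 * (Nv / D) = (c1 * leftLim u (z+η) + c2 * leftLim v (z+η) - (c1 * rightLim u (z-η) + c2 * rightLim v (z-η))) / D
  have : c1 * leftLim u (z+η) + c2 * leftLim v (z+η) - (c1 * rightLim u (z-η) + c2 * rightLim v (z-η)) = c1 * Nu + c2 * Nv := by
    unfold Nu Nv; ring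
  rw [this, add_div, mul_div_assoc, mul_div_assoc]

lemma hasDeriv_alpha_self (hα : StrictMonoOn α {x : ℝ | MemI a b x}) {z : ℝ} (hz : MemI a b z) :
    HasDerivAlpha α α z 1 := by
  refine Tendsto.congr' ?_ tendsto_const_nhds
  filter_upwards [eventually_denom_pos hα hz] with η hη
  exact (div_self (ne_of_gt hη)).symm

/-- The core chaining lemma: if across every point of `[x, y]` the one-sided limits
increase, then `leftLim u x ≤ leftLim u y`. -/
lemma chainM (hu : RegulatedOn' u a b) {x y : ℝ} (hx : MemI a b x) (hy : MemI a b y)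
    (hxy : x < y)
    (C : ∀ z, x ≤ z → z ≤ y → ∀ᶠ η in 𝓝[>] (0:ℝ), rightLim u (z - η) ≤ leftLim u (z + η)) :
    leftLim u x ≤ leftLim u y := by
  have memIcc : ∀ z, x ≤ z → z ≤ y → MemI a b z := fun z h1 h2 => hx.of_between hy h1 h2
  refine le_of_forall_pos_le_add (fun ε hε => ?_)
  set L := leftLim u x with hL
  set S := {t : ℝ | t ∈ Icc x y ∧ ∀ v, x < v → v < t → L - ε ≤ leftLim u v} with hS
  have hxS : x ∈ S := ⟨⟨le_refl x, hxy.le⟩, fun v h1 h2 => absurd (h1.trans h2) (lt_irrefl x)⟩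
  have hne : S.Nonempty := ⟨x, hxS⟩
  have hbdd : BddAbove S := ⟨y, fun t ht => ht.1.2⟩
  set c := sSup S with hc
  have hxc : x ≤ c := le_csSup hbdd hxS
  have hcy : c ≤ y := csSup_le hne (fun t ht => ht.1.2)
  have hcI : MemI a b c := memIcc c hxc hcy
  have hcS : ∀ v, x < v → v < c → L - ε ≤ leftLim u v := by
    intro v h1 h2
    obtain ⟨t, htS, hvt⟩ := exists_lt_of_lt_csSup hne h2
    exact htS.2 v h1 hvt
  have hev : ∀ᶠ η in 𝓝[>] (0:ℝ), L - ε ≤ leftLim u (c + η) := by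
    rcases eq_or_lt_of_le hxc with hcx | hcx
    · -- c = x
      have h1 : Tendsto (fun η => rightLim u (x - η)) (𝓝[>] (0:ℝ)) (𝓝 L) :=
        (tendsto_rightLim_Iio hu hx).comp (tendsto_sub_right x)
      have h2 : ∀ᶠ η in 𝓝[>] (0:ℝ), L - ε < rightLim u (x - η) :=
        h1.eventually (eventually_gt_nhds (by linarith))
      filter_upwards [h2, C x le_rfl hxy.le] with η hη1 hη2
      rw [← hcx]
      linarith
    · -- x < c
      have hstep : ∀ w, x < w → w < c → L - ε ≤ rightLim u w := by
        intro w h1 h2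
        refine ge_of_tendsto (tendsto_leftLim_Ioi hu (memIcc w h1.le (h2.le.trans hcy))) ?_
        filter_upwards [Ioo_mem_nhdsGT h2] with t ht
        exact hcS t (h1.trans ht.1) ht.2
      filter_upwards [C c hxc hcy, Ioo_mem_nhdsGT (show (0:ℝ) < c - x by linarith)]
        with η h1 h2
      have h3 : L - ε ≤ rightLim u (c - η) :=
        hstep (c - η) (by linarith [h2.2]) (by linarith [h2.1])
      linarith
  have hceq : c = y := by
    by_contra hnecy
    have hcy' : c < y := lt_of_le_of_ne hcy hnecy
    have hev2 : ∀ᶠ η in 𝓝[>] (0:ℝ), (L - ε ≤ leftLim u (c + η)) ∧ η < y - c := by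
      filter_upwards [hev, Ioo_mem_nhdsGT (show (0:ℝ) < y - c by linarith)] with η h1 h2
      exact ⟨h1, h2.2⟩
    obtain ⟨δ, hδ0, hδsub⟩ := ((nhdsGT_basis_of_exists_gt ⟨1, zero_lt_one⟩).mem_iff).1 hev2
    have hδ2 : δ/2 ∈ Ioo (0:ℝ) δ := ⟨by linarith, by linarith⟩
    have hδ2' := hδsub hδ2
    have hδ2y : δ/2 < y - c := hδ2'.2
    have ht'S : c + δ/2 ∈ S := by
      refine ⟨⟨by linarith, by linarith⟩, ?_⟩
      intro v h1 h2
      rcases lt_trichotomy v c with hvc | hvc | hvc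
      · exact hcS v h1 hvc
      · subst hvc
        refine ge_of_tendsto (tendsto_leftLim_Iio hu hcI) ?_
        filter_upwards [Ioo_mem_nhdsLT h1] with t ht
        exact hcS t ht.1 ht.2
      · have hvd : v - c ∈ Ioo (0:ℝ) δ := ⟨by linarith, by linarith⟩
        have h3 := (hδsub hvd).1
        rwa [add_sub_cancel] at h3
    have h4 : c + δ/2 ≤ c := le_csSup hbdd ht'S
    linarith
  have hall : ∀ v, x < v → v < y → L - ε ≤ leftLim u v := hceq ▸ hcS
  have hfin : L - ε ≤ leftLim u y := by
    refine ge_of_tendsto (tendsto_leftLim_Iio hu hy) ?_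
    filter_upwards [Ioo_mem_nhdsLT hxy] with t ht
    exact hall t ht.1 ht.2
  linarith

end Aux4
section Aux5

variable {a b : EReal} {u α : ℝ → ℝ}

lemma deriv_nonneg_mono (hα : StrictMonoOn α {x : ℝ | MemI a b x}) (hu : RegulatedOn' u a b)
    {x y : ℝ} (hx : MemI a b x) (hy : MemI a b y) (hxy : x ≤ y)
    (hder : ∀ z, x ≤ z → z ≤ y → ∃ A, 0 ≤ A ∧ HasDerivAlpha u α z A) :
    leftLim u x ≤ leftLim u y := by
  rcases eq_or_lt_of_le hxy with rfl | hlt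
  · exact le_refl _
  have hrα := regulated_alpha hα
  have key : ∀ δ : ℝ, 0 < δ →
      leftLim u x ≤ leftLim u y + δ * (leftLim α y - leftLim α x) := by
    intro δ hδ
    have hw : RegulatedOn' (fun t => 1 * u t + δ * α t) a b := regulated_comb hu hrα 1 δ
    have C : ∀ z, x ≤ z → z ≤ y → ∀ᶠ η in 𝓝[>] (0:ℝ),
        rightLim (fun t => 1 * u t + δ * α t) (z - η) ≤
          leftLim (fun t => 1 * u t + δ * α t) (z + η) := by
      intro z h1 h2
      have hzI : MemI a b z := hx.of_between hy h1 h2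
      obtain ⟨A, hA0, hdA⟩ := hder z h1 h2
      have hwd : HasDerivAlpha (fun t => 1 * u t + δ * α t) α z (1 * A + δ * 1) :=
        hasDeriv_comb hu hrα hzI hdA (hasDeriv_alpha_self hα hzI) 1 δ
      have hpos : (0:ℝ) < 1 * A + δ * 1 := by linarith
      have hev := (tendsto_order.1 hwd).1 0 hpos
      filter_upwards [hev, eventually_denom_pos hα hzI] with η h3 h4
      set w := fun t => 1 * u t + δ * α t
      have hDne : leftLim α (z + η) - rightLim α (z - η) ≠ 0 := ne_of_gt h4
      have h5 : 0 < (leftLim w (z + η) - rightLim w (z - η)) /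
          (leftLim α (z + η) - rightLim α (z - η)) *
          (leftLim α (z + η) - rightLim α (z - η)) := mul_pos h3 h4
      rw [div_mul_cancel₀ _ hDne] at h5
      linarith
    have := chainM hw hx hy hlt C
    rw [leftLim_comb hu hrα hx 1 δ, leftLim_comb hu hrα hy 1 δ] at this
    linarith
  have hK : 0 ≤ leftLim α y - leftLim α x := by
    have h1 := leftLim_le_self hα hx
    have h2 := self_le_rightLim hα hx
    have h3 := rightLim_lt_leftLim hα hx hy hlt
    linarith
  set K := leftLim α y - leftLim α x with hKdef
  refine le_of_forall_pos_le_add fun ε hε => ?_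
  have h := key (ε / (K + 1)) (by positivity)
  have h2 : (ε / (K + 1)) * K ≤ ε := by
    rw [div_mul_eq_mul_div, div_le_iff₀ (by linarith : (0:ℝ) < K + 1)]
    nlinarith
  linarith

lemma deriv_pos_strict (hα : StrictMonoOn α {x : ℝ | MemI a b x}) (hu : RegulatedOn' u a b)
    {x y m : ℝ} (hx : MemI a b x) (hy : MemI a b y) (hm1 : x < m) (hm2 : m < y)
    (hder : ∀ z, x ≤ z → z ≤ y → ∃ A, 0 ≤ A ∧ HasDerivAlpha u α z A)
    (hdm : ∃ A, 0 < A ∧ HasDerivAlpha u α m A) :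
    leftLim u x < leftLim u y := by
  have hmI : MemI a b m := hx.of_between hy hm1.le hm2.le
  obtain ⟨A, hA, hdA⟩ := hdm
  have hev := ((tendsto_order.1 hdA).1 0 hA).and ((eventually_denom_pos hα hmI).and
    ((eventually_memI_delta hmI).and
      (Ioo_mem_nhdsGT (show (0:ℝ) < min (m - x) (y - m) by
        simp only [lt_min_iff]; constructor <;> linarith))))
  obtain ⟨η, hr, hD, ⟨hmem1, hmem2⟩, hηm⟩ := hev.exists
  have hη0 : 0 < η := hηm.1
  have hη1 : η < m - x := lt_of_lt_of_le hηm.2 (min_le_left _ _)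
  have hη2 : η < y - m := lt_of_lt_of_le hηm.2 (min_le_right _ _)
  have hnum : rightLim u (m - η) < leftLim u (m + η) := by
    have h5 : 0 < (leftLim u (m + η) - rightLim u (m - η)) /
        (leftLim α (m + η) - rightLim α (m - η)) *
        (leftLim α (m + η) - rightLim α (m - η)) := mul_pos hr hD
    rw [div_mul_cancel₀ _ (ne_of_gt hD)] at h5
    linarith
  have s1 : leftLim u x ≤ leftLim u (m - η) :=
    deriv_nonneg_mono hα hu hx hmem1 (by linarith)
      (fun z h1 h2 => hder z h1 (by linarith))
  have s2 : leftLim u (m - η) ≤ rightLim u (m - η) := by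
    obtain ⟨A', hA'0, hdA'⟩ := hder (m - η) (by linarith) (by linarith)
    have hj := jump_eq hα hu hmem1 hdA'
    have := mul_nonneg hA'0 (sub_nonneg.2 (alpha_jump_nonneg hα hmem1))
    linarith
  have s4 : leftLim u (m + η) ≤ leftLim u y :=
    deriv_nonneg_mono hα hu hmem2 hy (by linarith)
      (fun z h1 h2 => hder z (by linarith) h2)
  linarith

end Aux5
section Aux6

variable {a b : EReal} {u α : ℝ → ℝ}

lemma leftFilter_neBot (hab : a < b) : (leftFilter b).NeBot := by
  refine Filter.comap_neBot fun t ht => ?_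
  obtain ⟨c, hc, hsub⟩ := (nhdsLT_basis_of_exists_lt ⟨a, hab⟩).mem_iff.1 ht
  obtain ⟨r, h1, h2⟩ := ereal_btwn hc
  exact ⟨r, hsub ⟨h1, h2⟩⟩

lemma rightFilter_neBot (hab : a < b) : (rightFilter a).NeBot := by
  refine Filter.comap_neBot fun t ht => ?_
  obtain ⟨c, hc, hsub⟩ := (nhdsGT_basis_of_exists_gt ⟨b, hab⟩).mem_iff.1 ht
  obtain ⟨r, h1, h2⟩ := ereal_btwn (show a < c from hc)
  exact ⟨r, hsub ⟨h1, h2⟩⟩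

lemma eventually_leftFilter {x : ℝ} (hx : MemI a b x) :
    ∀ᶠ s in leftFilter b, MemI a b s ∧ x < s := by
  have hmem : Ioo (x : EReal) b ∈ 𝓝[<] b := Ioo_mem_nhdsLT hx.2
  refine mem_of_superset (preimage_mem_comap hmem) ?_
  intro s hs
  exact ⟨⟨hx.1.trans hs.1, hs.2⟩, by exact EReal.coe_lt_coe_iff.1 hs.1⟩

lemma eventually_rightFilter {x : ℝ} (hx : MemI a b x) :
    ∀ᶠ s in rightFilter a, MemI a b s ∧ s < x := by
  have hmem : Ioo a (x : EReal) ∈ 𝓝[>] a := Ioo_mem_nhdsGT hx.1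
  refine mem_of_superset (preimage_mem_comap hmem) ?_
  intro s hs
  exact ⟨⟨hs.1, hs.2.trans hx.2⟩, by exact EReal.coe_lt_coe_iff.1 hs.2⟩

lemma nonpos_of_limb (hab : a < b) (hα : StrictMonoOn α {x : ℝ | MemI a b x})
    (hu : RegulatedOn' u a b) {t : ℝ} (ht : MemI a b t)
    (hder : ∀ z, MemI a b z → t ≤ z → ∃ A, 0 ≤ A ∧ HasDerivAlpha u α z A)
    (hlimu : Tendsto (leftLim u) (leftFilter b) (𝓝 0)) : leftLim u t ≤ 0 := by
  haveI := leftFilter_neBot hab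
  refine ge_of_tendsto hlimu ?_
  filter_upwards [eventually_leftFilter ht] with s hs
  exact deriv_nonneg_mono hα hu ht hs.1 hs.2.le
    (fun z h1 h2 => hder z (ht.of_between hs.1 h1 h2) h1)

lemma neg_of_limb (hab : a < b) (hα : StrictMonoOn α {x : ℝ | MemI a b x})
    (hu : RegulatedOn' u a b) {t : ℝ} (ht : MemI a b t)
    (hder : ∀ z, MemI a b z → ∃ A, 0 < A ∧ HasDerivAlpha u α z A)
    (hlimu : Tendsto (leftLim u) (leftFilter b) (𝓝 0)) : leftLim u t < 0 := by
  obtain ⟨q, htq, hq⟩ := exists_gt_memI ht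
  have hmI : MemI a b ((t + q)/2) := ht.of_between hq (by linarith) (by linarith)
  have h1 : leftLim u t < leftLim u q := by
    refine deriv_pos_strict (m := (t + q)/2) hα hu ht hq (by linarith) (by linarith)
      (fun z hz1 hz2 => ?_) ?_
    · obtain ⟨A, hA, hdA⟩ := hder z (ht.of_between hq hz1 hz2)
      exact ⟨A, hA.le, hdA⟩
    · exact hder _ hmI
  have h2 : leftLim u q ≤ 0 := by
    refine nonpos_of_limb hab hα hu hq (fun z hz _ => ?_) hlimu
    obtain ⟨A, hA, hdA⟩ := hder z hz
    exact ⟨A, hA.le, hdA⟩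
  linarith

lemma nonneg_of_lima (hab : a < b) (hα : StrictMonoOn α {x : ℝ | MemI a b x})
    (hu : RegulatedOn' u a b) {t : ℝ} (ht : MemI a b t)
    (hder : ∀ z, MemI a b z → z ≤ t → ∃ A, 0 ≤ A ∧ HasDerivAlpha u α z A)
    (hlimu : Tendsto (leftLim u) (rightFilter a) (𝓝 0)) : 0 ≤ leftLim u t := by
  haveI := rightFilter_neBot hab
  refine le_of_tendsto hlimu ?_
  filter_upwards [eventually_rightFilter ht] with s hs
  exact deriv_nonneg_mono hα hu hs.1 ht hs.2.le
    (fun z h1 h2 => hder z (hs.1.of_between ht h1 h2) h2)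

lemma pos_of_lima (hab : a < b) (hα : StrictMonoOn α {x : ℝ | MemI a b x})
    (hu : RegulatedOn' u a b) {t : ℝ} (ht : MemI a b t)
    (hder : ∀ z, MemI a b z → ∃ A, 0 < A ∧ HasDerivAlpha u α z A)
    (hlimu : Tendsto (leftLim u) (rightFilter a) (𝓝 0)) : 0 < leftLim u t := by
  obtain ⟨p, hpt, hp⟩ := exists_lt_memI ht
  have hmI : MemI a b ((p + t)/2) := hp.of_between ht (by linarith) (by linarith)
  have h1 : leftLim u p < leftLim u t := by
    refine deriv_pos_strict (m := (p + t)/2) hα hu hp ht (by linarith) (by linarith)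
      (fun z hz1 hz2 => ?_) ?_
    · obtain ⟨A, hA, hdA⟩ := hder z (hp.of_between ht hz1 hz2)
      exact ⟨A, hA.le, hdA⟩
    · exact hder _ hmI
  have h2 : 0 ≤ leftLim u p := by
    refine nonneg_of_lima hab hα hu hp (fun z hz _ => ?_) hlimu
    obtain ⟨A, hA, hdA⟩ := hder z hz
    exact ⟨A, hA.le, hdA⟩
  linarith

end Aux6
section Main

variable {a b : EReal} {f g α Df Dg : ℝ → ℝ}

lemma tendsto_leftLim_comb_filter {u v : ℝ → ℝ} {F : Filter ℝ}
    (hF : ∀ᶠ s in F, MemI a b s) (hu : RegulatedOn' u a b) (hv : RegulatedOn' v a b)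
    (c1 c2 : ℝ) (h1 : Tendsto (leftLim u) F (𝓝 0)) (h2 : Tendsto (leftLim v) F (𝓝 0)) :
    Tendsto (leftLim (fun t => c1 * u t + c2 * v t)) F (𝓝 0) := by
  have h3 := (h1.const_mul c1).add (h2.const_mul c2)
  have h4 : Tendsto (fun s => c1 * leftLim u s + c2 * leftLim v s) F (𝓝 0) := by
    simpa using h3
  refine Tendsto.congr' ?_ h4
  filter_upwards [hF] with s hs
  exact (leftLim_comb hu hv hs c1 c2).symm

lemma eventually_memI_leftFilter (hab : a < b) : ∀ᶠ s in leftFilter b, MemI a b s := by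
  obtain ⟨r, h1, h2⟩ := ereal_btwn hab
  exact (eventually_leftFilter ⟨h1, h2⟩).mono fun s hs => hs.1

lemma eventually_memI_rightFilter (hab : a < b) : ∀ᶠ s in rightFilter a, MemI a b s := by
  obtain ⟨r, h1, h2⟩ := ereal_btwn hab
  exact (eventually_rightFilter ⟨h1, h2⟩).mono fun s hs => hs.1

lemma caseb_main (hab : a < b)
    (hf : RegulatedOn' f a b) (hg : RegulatedOn' g a b)
    (hα : StrictMonoOn α {x : ℝ | MemI a b x})
    (hDf : ∀ x : ℝ, MemI a b x → HasDerivAlpha f α x (Df x))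
    (hDg : ∀ x : ℝ, MemI a b x → HasDerivAlpha g α x (Dg x))
    (hDgpos : ∀ x : ℝ, MemI a b x → 0 < Dg x)
    (hlf : Tendsto (leftLim f) (leftFilter b) (𝓝 0))
    (hlg : Tendsto (leftLim g) (leftFilter b) (𝓝 0)) :
    (MonotoneOn (fun x => Df x / Dg x) {x : ℝ | MemI a b x} →
      MonotoneOn (fun x => leftLim f x / leftLim g x) {x : ℝ | MemI a b x}) ∧
    (StrictMonoOn (fun x => Df x / Dg x) {x : ℝ | MemI a b x} →
      StrictMonoOn (fun x => leftLim f x / leftLim g x) {x : ℝ | MemI a b x}) := by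
  have hgneg : ∀ t : ℝ, MemI a b t → leftLim g t < 0 := fun t ht =>
    neg_of_limb hab hα hg ht (fun z hz => ⟨Dg z, hDgpos z hz, hDg z hz⟩) hlg
  -- the "between" inequality  Df t / Dg t ≤ f⁻ t / g⁻ t
  have hbetween : MonotoneOn (fun x => Df x / Dg x) {x : ℝ | MemI a b x} →
      ∀ t : ℝ, MemI a b t → Df t / Dg t ≤ leftLim f t / leftLim g t := by
    intro hr t ht
    set c := Df t / Dg t with hc
    have hu : RegulatedOn' (fun s => 1 * f s + (-c) * g s) a b := regulated_comb hf hg 1 (-c)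
    have hder : ∀ z, MemI a b z → t ≤ z →
        ∃ A, 0 ≤ A ∧ HasDerivAlpha (fun s => 1 * f s + (-c) * g s) α z A := by
      intro z hz htz
      refine ⟨1 * Df z + (-c) * Dg z, ?_, hasDeriv_comb hf hg hz (hDf z hz) (hDg z hz) 1 (-c)⟩
      have hd := hDgpos z hz
      have hrz : c ≤ Df z / Dg z := hr ht hz htz
      have heq : Df z = (Df z / Dg z) * Dg z := (div_mul_cancel₀ _ (ne_of_gt hd)).symm
      nlinarith
    have hlimu : Tendsto (leftLim (fun s => 1 * f s + (-c) * g s)) (leftFilter b) (𝓝 0) :=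
      tendsto_leftLim_comb_filter (eventually_memI_leftFilter hab) hf hg 1 (-c) hlf hlg
    have hle := nonpos_of_limb hab hα hu ht hder hlimu
    rw [leftLim_comb hf hg ht 1 (-c)] at hle
    exact (le_div_iff_of_neg (hgneg t ht)).2 (by linarith)
  constructor
  · intro hr
    intro x hx y hy hxy
    rcases eq_or_lt_of_le hxy with rfl | hlt
    · exact le_refl _
    have hxI : MemI a b x := hx
    have hyI : MemI a b y := hy
    set c := leftLim f y / leftLim g y with hc
    have hu : RegulatedOn' (fun s => c * g s + (-1) * f s) a b := regulated_comb hg hf c (-1)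
    have hmono := deriv_nonneg_mono hα hu hxI hyI hxy (fun z h1 h2 => by
      have hzI : MemI a b z := hxI.of_between hyI h1 h2
      refine ⟨c * Dg z + (-1) * Df z, ?_, hasDeriv_comb hg hf hzI (hDg z hzI) (hDf z hzI) c (-1)⟩
      have hd := hDgpos z hzI
      have hrz : Df z / Dg z ≤ Df y / Dg y := hr hzI hy h2
      have hcy : Df y / Dg y ≤ c := hbetween hr y hyI
      have heq : Df z = (Df z / Dg z) * Dg z := (div_mul_cancel₀ _ (ne_of_gt hd)).symm
      nlinarith)
    rw [leftLim_comb hg hf hxI c (-1), leftLim_comb hg hf hyI c (-1)] at hmono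
    have hy0 : c * leftLim g y = leftLim f y := div_mul_cancel₀ _ (hgneg y hyI).ne
    show leftLim f x / leftLim g x ≤ c
    rw [div_le_iff_of_neg (hgneg x hxI)]
    linarith
  · intro hr
    intro x hx y hy hxy
    have hxI : MemI a b x := hx
    have hyI : MemI a b y := hy
    have hrm := hr.monotoneOn
    set c := leftLim f y / leftLim g y with hc
    have hu : RegulatedOn' (fun s => c * g s + (-1) * f s) a b := regulated_comb hg hf c (-1)
    have hmI : MemI a b ((x + y)/2) := hxI.of_between hyI (by linarith) (by linarith)
    have hder : ∀ z, x ≤ z → z ≤ y →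
        ∃ A, 0 ≤ A ∧ HasDerivAlpha (fun s => c * g s + (-1) * f s) α z A := by
      intro z h1 h2
      have hzI : MemI a b z := hxI.of_between hyI h1 h2
      refine ⟨c * Dg z + (-1) * Df z, ?_, hasDeriv_comb hg hf hzI (hDg z hzI) (hDf z hzI) c (-1)⟩
      have hd := hDgpos z hzI
      have hrz : Df z / Dg z ≤ Df y / Dg y := hrm hzI hy h2
      have hcy : Df y / Dg y ≤ c := hbetween hrm y hyI
      have heq : Df z = (Df z / Dg z) * Dg z := (div_mul_cancel₀ _ (ne_of_gt hd)).symm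
      nlinarith
    have hstrict := deriv_pos_strict (m := (x + y)/2) hα hu hxI hyI (by linarith) (by linarith)
      hder ?_
    · rw [leftLim_comb hg hf hxI c (-1), leftLim_comb hg hf hyI c (-1)] at hstrict
      have hy0 : c * leftLim g y = leftLim f y := div_mul_cancel₀ _ (hgneg y hyI).ne
      show leftLim f x / leftLim g x < c
      rw [div_lt_iff_of_neg (hgneg x hxI)]
      linarith
    · refine ⟨c * Dg ((x + y)/2) + (-1) * Df ((x + y)/2), ?_,
        hasDeriv_comb hg hf hmI (hDg _ hmI) (hDf _ hmI) c (-1)⟩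
      have hd := hDgpos _ hmI
      have hrz : Df ((x + y)/2) / Dg ((x + y)/2) < Df y / Dg y := hr hmI hy (by linarith)
      have hcy : Df y / Dg y ≤ c := hbetween hrm y hyI
      have heq : Df ((x + y)/2) = (Df ((x + y)/2) / Dg ((x + y)/2)) * Dg ((x + y)/2) :=
        (div_mul_cancel₀ _ (ne_of_gt hd)).symm
      nlinarith

end Main
section MainA

variable {a b : EReal} {f g α Df Dg : ℝ → ℝ}

lemma casea_main (hab : a < b)
    (hf : RegulatedOn' f a b) (hg : RegulatedOn' g a b)
    (hα : StrictMonoOn α {x : ℝ | MemI a b x})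
    (hDf : ∀ x : ℝ, MemI a b x → HasDerivAlpha f α x (Df x))
    (hDg : ∀ x : ℝ, MemI a b x → HasDerivAlpha g α x (Dg x))
    (hDgpos : ∀ x : ℝ, MemI a b x → 0 < Dg x)
    (hlf : Tendsto (leftLim f) (rightFilter a) (𝓝 0))
    (hlg : Tendsto (leftLim g) (rightFilter a) (𝓝 0)) :
    (MonotoneOn (fun x => Df x / Dg x) {x : ℝ | MemI a b x} →
      MonotoneOn (fun x => leftLim f x / leftLim g x) {x : ℝ | MemI a b x}) ∧
    (StrictMonoOn (fun x => Df x / Dg x) {x : ℝ | MemI a b x} →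
      StrictMonoOn (fun x => leftLim f x / leftLim g x) {x : ℝ | MemI a b x}) := by
  have hgpos : ∀ t : ℝ, MemI a b t → 0 < leftLim g t := fun t ht =>
    pos_of_lima hab hα hg ht (fun z hz => ⟨Dg z, hDgpos z hz, hDg z hz⟩) hlg
  -- the "between" inequality  f⁻ t / g⁻ t ≤ Df t / Dg t
  have hbetween : MonotoneOn (fun x => Df x / Dg x) {x : ℝ | MemI a b x} →
      ∀ t : ℝ, MemI a b t → leftLim f t / leftLim g t ≤ Df t / Dg t := by
    intro hr t ht
    set c := Df t / Dg t with hc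
    have hu : RegulatedOn' (fun s => c * g s + (-1) * f s) a b := regulated_comb hg hf c (-1)
    have hder : ∀ z, MemI a b z → z ≤ t →
        ∃ A, 0 ≤ A ∧ HasDerivAlpha (fun s => c * g s + (-1) * f s) α z A := by
      intro z hz htz
      refine ⟨c * Dg z + (-1) * Df z, ?_, hasDeriv_comb hg hf hz (hDg z hz) (hDf z hz) c (-1)⟩
      have hd := hDgpos z hz
      have hrz : Df z / Dg z ≤ c := hr hz ht htz
      have heq : Df z = (Df z / Dg z) * Dg z := (div_mul_cancel₀ _ (ne_of_gt hd)).symm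
      nlinarith
    have hlimu : Tendsto (leftLim (fun s => c * g s + (-1) * f s)) (rightFilter a) (𝓝 0) :=
      tendsto_leftLim_comb_filter (eventually_memI_rightFilter hab) hg hf c (-1) hlg hlf
    have hle := nonneg_of_lima hab hα hu ht hder hlimu
    rw [leftLim_comb hg hf ht c (-1)] at hle
    rw [div_le_iff₀ (hgpos t ht)]
    linarith
  constructor
  · intro hr
    intro x hx y hy hxy
    rcases eq_or_lt_of_le hxy with rfl | hlt
    · exact le_refl _
    have hxI : MemI a b x := hx
    have hyI : MemI a b y := hy
    set c := leftLim f x / leftLim g x with hc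
    have hu : RegulatedOn' (fun s => 1 * f s + (-c) * g s) a b := regulated_comb hf hg 1 (-c)
    have hmono := deriv_nonneg_mono hα hu hxI hyI hxy (fun z h1 h2 => by
      have hzI : MemI a b z := hxI.of_between hyI h1 h2
      refine ⟨1 * Df z + (-c) * Dg z, ?_, hasDeriv_comb hf hg hzI (hDf z hzI) (hDg z hzI) 1 (-c)⟩
      have hd := hDgpos z hzI
      have hrz : Df x / Dg x ≤ Df z / Dg z := hr hx hzI h1
      have hcx : c ≤ Df x / Dg x := hbetween hr x hxI
      have heq : Df z = (Df z / Dg z) * Dg z := (div_mul_cancel₀ _ (ne_of_gt hd)).symm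
      nlinarith)
    rw [leftLim_comb hf hg hxI 1 (-c), leftLim_comb hf hg hyI 1 (-c)] at hmono
    have hx0 : c * leftLim g x = leftLim f x := div_mul_cancel₀ _ (hgpos x hxI).ne'
    show c ≤ leftLim f y / leftLim g y
    rw [le_div_iff₀ (hgpos y hyI)]
    linarith
  · intro hr
    intro x hx y hy hxy
    have hxI : MemI a b x := hx
    have hyI : MemI a b y := hy
    have hrm := hr.monotoneOn
    set c := leftLim f x / leftLim g x with hc
    have hu : RegulatedOn' (fun s => 1 * f s + (-c) * g s) a b := regulated_comb hf hg 1 (-c)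
    have hmI : MemI a b ((x + y)/2) := hxI.of_between hyI (by linarith) (by linarith)
    have hder : ∀ z, x ≤ z → z ≤ y →
        ∃ A, 0 ≤ A ∧ HasDerivAlpha (fun s => 1 * f s + (-c) * g s) α z A := by
      intro z h1 h2
      have hzI : MemI a b z := hxI.of_between hyI h1 h2
      refine ⟨1 * Df z + (-c) * Dg z, ?_, hasDeriv_comb hf hg hzI (hDf z hzI) (hDg z hzI) 1 (-c)⟩
      have hd := hDgpos z hzI
      have hrz : Df x / Dg x ≤ Df z / Dg z := hrm hx hzI h1
      have hcx : c ≤ Df x / Dg x := hbetween hrm x hxI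
      have heq : Df z = (Df z / Dg z) * Dg z := (div_mul_cancel₀ _ (ne_of_gt hd)).symm
      nlinarith
    have hstrict := deriv_pos_strict (m := (x + y)/2) hα hu hxI hyI (by linarith) (by linarith)
      hder ?_
    · rw [leftLim_comb hf hg hxI 1 (-c), leftLim_comb hf hg hyI 1 (-c)] at hstrict
      have hx0 : c * leftLim g x = leftLim f x := div_mul_cancel₀ _ (hgpos x hxI).ne'
      show c < leftLim f y / leftLim g y
      rw [lt_div_iff₀ (hgpos y hyI)]
      linarith
    · refine ⟨1 * Df ((x + y)/2) + (-c) * Dg ((x + y)/2), ?_,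
        hasDeriv_comb hf hg hmI (hDf _ hmI) (hDg _ hmI) 1 (-c)⟩
      have hd := hDgpos _ hmI
      have hrz : Df x / Dg x < Df ((x + y)/2) / Dg ((x + y)/2) := hr hx hmI (by linarith)
      have hcx : c ≤ Df x / Dg x := hbetween hrm x hxI
      have heq : Df ((x + y)/2) = (Df ((x + y)/2) / Dg ((x + y)/2)) * Dg ((x + y)/2) :=
        (div_mul_cancel₀ _ (ne_of_gt hd)).symm
      nlinarith

end MainA
section Neg

variable {a b : EReal} {f α : ℝ → ℝ}

lemma regulated_neg (hf : RegulatedOn' f a b) : RegulatedOn' (fun t => -f t) a b := by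
  intro z hz
  obtain ⟨⟨L, hL⟩, ⟨R, hR⟩⟩ := hf z hz
  exact ⟨⟨-L, hL.neg⟩, ⟨-R, hR.neg⟩⟩

lemma leftLim_neg' (hf : RegulatedOn' f a b) {z : ℝ} (hz : MemI a b z) :
    leftLim (fun t => -f t) z = -leftLim f z :=
  leftLim_eq_of_tendsto (leftLim_tendsto' hf hz).neg

lemma rightLim_neg' (hf : RegulatedOn' f a b) {z : ℝ} (hz : MemI a b z) :
    rightLim (fun t => -f t) z = -rightLim f z :=
  rightLim_eq_of_tendsto (rightLim_tendsto' hf hz).neg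

lemma hasDeriv_neg (hf : RegulatedOn' f a b) {z A : ℝ} (hz : MemI a b z)
    (hd : HasDerivAlpha f α z A) : HasDerivAlpha (fun t => -f t) α z (-A) := by
  refine Tendsto.congr' ?_ hd.neg
  filter_upwards [eventually_memI_delta hz] with η hη
  rw [leftLim_neg' hf hη.2, rightLim_neg' hf hη.1]
  rw [← neg_div]
  ring_nf

lemma tendsto_leftLim_neg_filter {F : Filter ℝ} (hF : ∀ᶠ s in F, MemI a b s)
    (hf : RegulatedOn' f a b) (h : Tendsto (leftLim f) F (𝓝 0)) :
    Tendsto (leftLim (fun t => -f t)) F (𝓝 0) := by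
  have h2 : Tendsto (fun s => -leftLim f s) F (𝓝 0) := by simpa using h.neg
  refine Tendsto.congr' ?_ h2
  filter_upwards [hF] with s hs
  exact (leftLim_neg' hf hs).symm

end Neg

/-- L'Hospital's monotone rule for regulated functions. -/
theorem stmt17 (a b : EReal) (hab : a < b) (f g α : ℝ → ℝ) (Df Dg : ℝ → ℝ)
    (hf : RegulatedOn' f a b) (hg : RegulatedOn' g a b)
    (hα : StrictMonoOn α {x : ℝ | MemI a b x})
    (hDf : ∀ x : ℝ, MemI a b x → HasDerivAlpha f α x (Df x))
    (hDg : ∀ x : ℝ, MemI a b x → HasDerivAlpha g α x (Dg x))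
    (hsign : (∀ x : ℝ, MemI a b x → 0 < Dg x) ∨ (∀ x : ℝ, MemI a b x → Dg x < 0))
    (hlim : (Tendsto (leftLim f) (leftFilter b) (𝓝 0) ∧
              Tendsto (leftLim g) (leftFilter b) (𝓝 0)) ∨
            (Tendsto (leftLim f) (rightFilter a) (𝓝 0) ∧
              Tendsto (leftLim g) (rightFilter a) (𝓝 0))) :
    (MonotoneOn (fun x => Df x / Dg x) {x : ℝ | MemI a b x} →
      MonotoneOn (fun x => leftLim f x / leftLim g x) {x : ℝ | MemI a b x}) ∧
    (StrictMonoOn (fun x => Df x / Dg x) {x : ℝ | MemI a b x} →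
      StrictMonoOn (fun x => leftLim f x / leftLim g x) {x : ℝ | MemI a b x}) := by
  rcases hsign with hpos | hneg
  · rcases hlim with ⟨h1, h2⟩ | ⟨h1, h2⟩
    · exact caseb_main hab hf hg hα hDf hDg hpos h1 h2
    · exact casea_main hab hf hg hα hDf hDg hpos h1 h2
  · have hf' := regulated_neg hf
    have hg' := regulated_neg hg
    have hDf' : ∀ x : ℝ, MemI a b x → HasDerivAlpha (fun t => -f t) α x (-Df x) :=
      fun x hx => hasDeriv_neg hf hx (hDf x hx)
    have hDg' : ∀ x : ℝ, MemI a b x → HasDerivAlpha (fun t => -g t) α x (-Dg x) :=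
      fun x hx => hasDeriv_neg hg hx (hDg x hx)
    have hpos' : ∀ x : ℝ, MemI a b x → 0 < -Dg x := fun x hx => by linarith [hneg x hx]
    have key : (MonotoneOn (fun x => -Df x / -Dg x) {x : ℝ | MemI a b x} →
        MonotoneOn (fun x => leftLim (fun t => -f t) x / leftLim (fun t => -g t) x)
          {x : ℝ | MemI a b x}) ∧
        (StrictMonoOn (fun x => -Df x / -Dg x) {x : ℝ | MemI a b x} →
        StrictMonoOn (fun x => leftLim (fun t => -f t) x / leftLim (fun t => -g t) x)
          {x : ℝ | MemI a b x}) := by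
      rcases hlim with ⟨h1, h2⟩ | ⟨h1, h2⟩
      · exact caseb_main hab hf' hg' hα hDf' hDg' hpos'
          (tendsto_leftLim_neg_filter (eventually_memI_leftFilter hab) hf h1)
          (tendsto_leftLim_neg_filter (eventually_memI_leftFilter hab) hg h2)
      · exact casea_main hab hf' hg' hα hDf' hDg' hpos'
          (tendsto_leftLim_neg_filter (eventually_memI_rightFilter hab) hf h1)
          (tendsto_leftLim_neg_filter (eventually_memI_rightFilter hab) hg h2)
    have hratio : (fun x => -Df x / -Dg x) = fun x => Df x / Dg x :=
      funext fun x => neg_div_neg_eq _ _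
    rw [hratio] at key
    constructor
    · intro hr
      intro x hx y hy hxy
      have h2 := key.1 hr hx hy hxy
      simp only at h2
      rwa [leftLim_neg' hf hx, leftLim_neg' hg hx, leftLim_neg' hf hy, leftLim_neg' hg hy,
        neg_div_neg_eq, neg_div_neg_eq] at h2
    · intro hr
      intro x hx y hy hxy
      have h2 := key.2 hr hx hy hxy
      simp only at h2
      rwa [leftLim_neg' hf hx, leftLim_neg' hg hx, leftLim_neg' hf hy, leftLim_neg' hg hy,
        neg_div_neg_eq, neg_div_neg_eq] at h2
end

section
/- Local Lipschitz estimate from a bounded α-derivative: Let f be regulated on (a,b), α strictly increasing, with (D_α f)(x) existing for all x ∈ (a,b), and suppose D_α f is locally bounded on (a,b). Then for any a < s < t < b there exists M > 0 such that |f^-(y) - f^+(x)| ≤ M (α^-(y) - α^+(x)) for all s ≤ x < y ≤ t. Consequently f^- is of locally bounded variation on (a,b). -/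
open Filter Topology Function Set MeasureTheory

lemma auxA (φ : ℝ → ℝ) (z L : ℝ)
    (hL : Tendsto φ (𝓝[<] z) (𝓝 L))
    (hex : ∀ᶠ w in 𝓝[<] z, ∃ R, Tendsto φ (𝓝[>] w) (𝓝 R)) :
    Tendsto (rightLim φ) (𝓝[<] z) (𝓝 L) := by
  rw [Metric.tendsto_nhdsWithin_nhds] at hL ⊢
  intro ε hε
  obtain ⟨δ, hδ, h1⟩ := hL (ε/2) (by positivity)
  obtain ⟨l, hl, h2⟩ := mem_nhdsLT_iff_exists_Ioo_subset.1 hex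
  refine ⟨min δ (z - l), lt_min hδ (sub_pos.2 hl), ?_⟩
  intro w hw hwd
  have hwz : w < z := hw
  have hdist : z - w < min δ (z - l) := by
    rw [Real.dist_eq, abs_of_neg (by linarith : w - z < 0), neg_sub] at hwd; exact hwd
  have hd1 : z - w < δ := lt_of_lt_of_le hdist (min_le_left _ _)
  have hlw : l < w := by have := lt_of_lt_of_le hdist (min_le_right _ _); linarith
  obtain ⟨R, hR⟩ := h2 ⟨hlw, hwz⟩
  have hnb : (𝓝[>] w).NeBot := inferInstance
  rw [rightLim_eq_of_tendsto hR]
  have hT : Tendsto (fun u => dist (φ u) L) (𝓝[>] w) (𝓝 (dist R L)) :=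
    hR.dist tendsto_const_nhds
  have hev : ∀ᶠ u in 𝓝[>] w, dist (φ u) L ≤ ε/2 := by
    filter_upwards [Ioo_mem_nhdsGT_of_mem (⟨le_refl w, hwz⟩ : w ∈ Ico w z)] with u hu
    refine (h1 (hu.2 : u ∈ Iio z) ?_).le
    rw [Real.dist_eq, abs_of_neg (by linarith [hu.2] : u - z < 0), neg_sub]
    linarith [hu.1]
  have := le_of_tendsto hT hev
  linarith

lemma auxB (φ : ℝ → ℝ) (z R : ℝ)
    (hR : Tendsto φ (𝓝[>] z) (𝓝 R))
    (hex : ∀ᶠ w in 𝓝[>] z, ∃ R', Tendsto φ (𝓝[>] w) (𝓝 R')) :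
    Tendsto (rightLim φ) (𝓝[>] z) (𝓝 R) := by
  rw [Metric.tendsto_nhdsWithin_nhds] at hR ⊢
  intro ε hε
  obtain ⟨δ, hδ, h1⟩ := hR (ε/2) (by positivity)
  obtain ⟨r, hr, h2⟩ := mem_nhdsGT_iff_exists_Ioo_subset.1 hex
  refine ⟨min δ (r - z), lt_min hδ (sub_pos.2 hr), ?_⟩
  intro w hw hwd
  have hwz : z < w := hw
  have hdist : w - z < min δ (r - z) := by
    rw [Real.dist_eq, abs_of_pos (by linarith : (0:ℝ) < w - z)] at hwd; exact hwd
  have hd1 : w - z < δ := lt_of_lt_of_le hdist (min_le_left _ _)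
  have hwr : w < r := by have := lt_of_lt_of_le hdist (min_le_right _ _); linarith
  obtain ⟨R', hR'⟩ := h2 ⟨hwz, hwr⟩
  have hnb : (𝓝[>] w).NeBot := inferInstance
  rw [rightLim_eq_of_tendsto hR']
  have hT : Tendsto (fun u => dist (φ u) R) (𝓝[>] w) (𝓝 (dist R' R)) :=
    hR'.dist tendsto_const_nhds
  have hev : ∀ᶠ u in 𝓝[>] w, dist (φ u) R ≤ ε/2 := by
    filter_upwards [Ioo_mem_nhdsGT_of_mem (⟨le_refl w, show w < z + δ by linarith⟩ : w ∈ Ico w (z + δ))] with u hu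
    refine (h1 (show u ∈ Ioi z from lt_trans hwz hu.1) ?_).le
    rw [Real.dist_eq, abs_of_pos (by linarith [hu.1] : (0:ℝ) < u - z)]
    linarith [hu.2]
  have := le_of_tendsto hT hev
  linarith

lemma auxC (φ : ℝ → ℝ) (z R : ℝ)
    (hR : Tendsto φ (𝓝[>] z) (𝓝 R))
    (hex : ∀ᶠ w in 𝓝[>] z, ∃ L, Tendsto φ (𝓝[<] w) (𝓝 L)) :
    Tendsto (leftLim φ) (𝓝[>] z) (𝓝 R) := by
  rw [Metric.tendsto_nhdsWithin_nhds] at hR ⊢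
  intro ε hε
  obtain ⟨δ, hδ, h1⟩ := hR (ε/2) (by positivity)
  obtain ⟨r, hr, h2⟩ := mem_nhdsGT_iff_exists_Ioo_subset.1 hex
  refine ⟨min δ (r - z), lt_min hδ (sub_pos.2 hr), ?_⟩
  intro w hw hwd
  have hwz : z < w := hw
  have hdist : w - z < min δ (r - z) := by
    rw [Real.dist_eq, abs_of_pos (by linarith : (0:ℝ) < w - z)] at hwd; exact hwd
  have hd1 : w - z < δ := lt_of_lt_of_le hdist (min_le_left _ _)
  have hwr : w < r := by have := lt_of_lt_of_le hdist (min_le_right _ _); linarith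
  obtain ⟨L', hL'⟩ := h2 ⟨hwz, hwr⟩
  have hnb : (𝓝[<] w).NeBot := inferInstance
  rw [leftLim_eq_of_tendsto hL']
  have hT : Tendsto (fun u => dist (φ u) R) (𝓝[<] w) (𝓝 (dist L' R)) :=
    hL'.dist tendsto_const_nhds
  have hev : ∀ᶠ u in 𝓝[<] w, dist (φ u) R ≤ ε/2 := by
    filter_upwards [Ioo_mem_nhdsLT_of_mem (⟨hwz, le_refl w⟩ : w ∈ Ioc z w)] with u hu
    refine (h1 (show u ∈ Ioi z from hu.1) ?_).le
    rw [Real.dist_eq, abs_of_pos (by linarith [hu.1] : (0:ℝ) < u - z)]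
    linarith [hu.2]
  have := le_of_tendsto hT hev
  linarith

lemma tA (φ : ℝ → ℝ) (S : Set ℝ) (hS : IsOpen S) (z : ℝ) (hz : z ∈ S)
    (hreg : ∀ w ∈ S, (∃ L, Tendsto φ (𝓝[<] w) (𝓝 L)) ∧ ∃ R, Tendsto φ (𝓝[>] w) (𝓝 R)) :
    Tendsto (rightLim φ) (𝓝[<] z) (𝓝 (leftLim φ z)) := by
  obtain ⟨L, hL⟩ := (hreg z hz).1
  have hnb : (𝓝[<] z).NeBot := inferInstance
  rw [leftLim_eq_of_tendsto hL]
  refine auxA φ z L hL ?_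
  filter_upwards [mem_nhdsWithin_of_mem_nhds (hS.mem_nhds hz)] with w hw
  exact (hreg w hw).2

lemma tB (φ : ℝ → ℝ) (S : Set ℝ) (hS : IsOpen S) (z : ℝ) (hz : z ∈ S)
    (hreg : ∀ w ∈ S, (∃ L, Tendsto φ (𝓝[<] w) (𝓝 L)) ∧ ∃ R, Tendsto φ (𝓝[>] w) (𝓝 R)) :
    Tendsto (rightLim φ) (𝓝[>] z) (𝓝 (rightLim φ z)) := by
  obtain ⟨R, hR⟩ := (hreg z hz).2
  have hnb : (𝓝[>] z).NeBot := inferInstance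
  rw [rightLim_eq_of_tendsto hR]
  refine auxB φ z R hR ?_
  filter_upwards [mem_nhdsWithin_of_mem_nhds (hS.mem_nhds hz)] with w hw
  exact (hreg w hw).2

lemma tC (φ : ℝ → ℝ) (S : Set ℝ) (hS : IsOpen S) (z : ℝ) (hz : z ∈ S)
    (hreg : ∀ w ∈ S, (∃ L, Tendsto φ (𝓝[<] w) (𝓝 L)) ∧ ∃ R, Tendsto φ (𝓝[>] w) (𝓝 R)) :
    Tendsto (leftLim φ) (𝓝[>] z) (𝓝 (rightLim φ z)) := by
  obtain ⟨R, hR⟩ := (hreg z hz).2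
  have hnb : (𝓝[>] z).NeBot := inferInstance
  rw [rightLim_eq_of_tendsto hR]
  refine auxC φ z R hR ?_
  filter_upwards [mem_nhdsWithin_of_mem_nhds (hS.mem_nhds hz)] with w hw
  exact (hreg w hw).1

lemma shiftR (z : ℝ) : Tendsto (fun h : ℝ => z + h) (𝓝[>] (0:ℝ)) (𝓝[>] z) := by
  apply tendsto_nhdsWithin_of_tendsto_nhds_of_eventually_within
  · have : Tendsto (fun h : ℝ => z + h) (𝓝 (0:ℝ)) (𝓝 (z + 0)) :=
      (continuous_const.add continuous_id).tendsto 0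
    simpa using this.mono_left nhdsWithin_le_nhds
  · filter_upwards [self_mem_nhdsWithin] with h hh
    exact mem_Ioi.2 (by simp at hh; linarith)

lemma shiftL (z : ℝ) : Tendsto (fun h : ℝ => z - h) (𝓝[>] (0:ℝ)) (𝓝[<] z) := by
  apply tendsto_nhdsWithin_of_tendsto_nhds_of_eventually_within
  · have : Tendsto (fun h : ℝ => z - h) (𝓝 (0:ℝ)) (𝓝 (z - 0)) :=
      (continuous_const.sub continuous_id).tendsto 0
    simpa using this.mono_left nhdsWithin_le_nhds
  · filter_upwards [self_mem_nhdsWithin] with h hh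
    exact mem_Iio.2 (by simp at hh; linarith)

lemma key (Gp Gm : ℝ → ℝ) (u v : ℝ) (huv : u < v)
    (hi : ∀ z ∈ Ioc u v, Tendsto Gp (𝓝[<] z) (𝓝 (Gm z)))
    (hii : ∀ z ∈ Ico u v, Tendsto Gp (𝓝[>] z) (𝓝 (Gp z)))
    (hiii : ∀ c ∈ Icc u v, ∀ᶠ h in 𝓝[>] (0:ℝ), Gp (c - h) ≤ Gm (c + h)) :
    Gp u ≤ Gm v := by
  by_contra hcon
  push_neg at hcon
  set lam := (Gm v + Gp u) / 2 with hlam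
  have hl1 : Gm v < lam := by rw [hlam]; linarith
  have hl2 : lam < Gp u := by rw [hlam]; linarith
  set E := {z | z ∈ Ico u v ∧ lam < Gp z} with hE
  have huE : u ∈ E := ⟨⟨le_refl u, huv⟩, hl2⟩
  have hbddE : BddAbove E := ⟨v, fun z hz => hz.1.2.le⟩
  have hne : E.Nonempty := ⟨u, huE⟩
  set p := sSup E with hp
  have hup : u ≤ p := le_csSup hbddE huE
  have hpv : p ≤ v := csSup_le hne fun z hz => hz.1.2.le
  rcases eq_or_lt_of_le hpv with hpv' | hpv'
  · -- p = v
    have hev : ∀ᶠ w in 𝓝[<] v, Gp w < lam :=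
      (hi v ⟨huv, le_refl v⟩).eventually (Filter.Tendsto.eventually_lt_const hl1 tendsto_id)
    obtain ⟨l, hl, hsub2⟩ := mem_nhdsLT_iff_exists_Ioo_subset.1 hev
    obtain ⟨z, hzE, hzl⟩ := exists_lt_of_lt_csSup hne (show l < sSup E by rw [← hp, hpv']; exact hl)
    have : Gp z < lam := hsub2 ⟨hzl, hzE.1.2⟩
    exact absurd hzE.2 (not_lt.2 this.le)
  · -- p < v
    have hnotE : ∀ z ∈ Ioo p v, Gp z ≤ lam := by
      intro z hz
      by_contra hgt; push_neg at hgt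
      have hzE : z ∈ E := ⟨⟨hup.trans hz.1.le, hz.2⟩, hgt⟩
      exact absurd (le_csSup hbddE hzE) (not_le.2 hz.1)
    have hGm : ∀ z ∈ Ioc p v, Gm z ≤ lam := by
      intro z hz
      refine le_of_tendsto (hi z ⟨lt_of_le_of_lt hup hz.1, hz.2⟩) ?_
      filter_upwards [Ioo_mem_nhdsLT_of_mem (⟨hz.1, le_refl z⟩ : z ∈ Ioc p z)] with w hw
      exact hnotE w ⟨hw.1, lt_of_lt_of_le hw.2 hz.2⟩
    have h4 : ∀ᶠ h in 𝓝[>] (0:ℝ), Gp (p - h) ≤ lam := by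
      filter_upwards [hiii p ⟨hup, hpv⟩,
        Ioo_mem_nhdsGT_of_mem (⟨le_refl (0:ℝ), sub_pos.2 hpv'⟩ : (0:ℝ) ∈ Ico 0 (v - p))] with h h1 h2
      exact h1.trans (hGm (p + h) ⟨by linarith [h2.1], by linarith [h2.2]⟩)
    obtain ⟨r, hr, hrs⟩ := mem_nhdsGT_iff_exists_Ioo_subset.1 h4
    have hr0 : (0:ℝ) < r := hr
    have hpE : Gp p ≤ lam := by
      refine le_of_tendsto (hii p ⟨hup, hpv'⟩) ?_
      filter_upwards [Ioo_mem_nhdsGT_of_mem (⟨le_refl p, hpv'⟩ : p ∈ Ico p v)] with w hw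
      exact hnotE w hw
    have hfin : p ≤ p - r/2 := by
      rw [hp]
      refine csSup_le hne fun z hz => ?_
      by_contra hzp; push_neg at hzp
      have hzlep : z ≤ p := le_csSup hbddE hz
      have hzltp : z < p := lt_of_le_of_ne hzlep (by
        intro h; rw [h] at hz; exact absurd hz.2 (not_lt.2 hpE))
      have hGz : Gp z ≤ lam := by
        have hzz : z = p - (p - z) := by ring
        rw [hzz]
        exact hrs ⟨by linarith, by linarith⟩
      exact absurd hz.2 (not_lt.2 hGz)
    linarith

lemma bv_aux (F A : ℝ → ℝ) (M : ℝ) (s : Set ℝ) (x y : ℝ) (hx : x ∈ s) (hy : y ∈ s)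
    (hsub : ∀ u ∈ s, x ≤ u ∧ u ≤ y)
    (hlip : ∀ u ∈ s, ∀ v ∈ s, u ≤ v → |F v - F u| ≤ M * (A v - A u)) :
    BoundedVariationOn F s := by
  have hb : eVariationOn F s ≤ ENNReal.ofReal (M * (A y - A x)) := by
    apply iSup_le
    rintro ⟨n, ⟨u, hu, us⟩⟩
    have key0 : ∀ i, 0 ≤ M * (A (u (i+1)) - A (u i)) := fun i =>
      le_trans (abs_nonneg _) (hlip _ (us i) _ (us (i+1)) (hu (Nat.le_succ _)))
    calc ∑ i ∈ Finset.range n, edist (F (u (i+1))) (F (u i))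
        ≤ ∑ i ∈ Finset.range n, ENNReal.ofReal (M * (A (u (i+1)) - A (u i))) := by
          refine Finset.sum_le_sum fun i _ => ?_
          rw [edist_dist, Real.dist_eq]
          exact ENNReal.ofReal_le_ofReal (hlip _ (us i) _ (us (i+1)) (hu (Nat.le_succ _)))
      _ = ENNReal.ofReal (∑ i ∈ Finset.range n, (M * A (u (i+1)) - M * A (u i))) := by
          have e1 : ∀ i ∈ Finset.range n, ENNReal.ofReal (M * (A (u (i+1)) - A (u i)))
              = ENNReal.ofReal (M * A (u (i+1)) - M * A (u i)) := fun i _ => by rw [mul_sub]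
          rw [Finset.sum_congr rfl e1,
            ← ENNReal.ofReal_sum_of_nonneg
              (fun i hi => by nlinarith [key0 i] : ∀ i ∈ Finset.range n, 0 ≤ M * A (u (i+1)) - M * A (u i))]
      _ = ENNReal.ofReal (M * A (u n) - M * A (u 0)) := by
          rw [Finset.sum_range_sub (fun i => M * A (u i))]
      _ ≤ ENNReal.ofReal (M * (A y - A x)) := by
          apply ENNReal.ofReal_le_ofReal
          have g1 : 0 ≤ M * (A y - A (u n)) :=
            le_trans (abs_nonneg _) (hlip _ (us n) y hy (hsub _ (us n)).2)
          have g2 : 0 ≤ M * (A (u 0) - A x) :=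
            le_trans (abs_nonneg _) (hlip x hx _ (us 0) (hsub _ (us 0)).1)
          nlinarith [g1, g2]
  exact (hb.trans_lt ENNReal.ofReal_lt_top).ne

/-- A locally bounded `α`-derivative yields a local Lipschitz-type estimate with
respect to `α`, and consequently `f⁻` is of locally bounded variation. -/
theorem stmt18 (a b : EReal) (hab : a < b) (f α : ℝ → ℝ) (D : ℝ → ℝ)
    (hf : RegulatedOn' f a b) (hα : StrictMonoOn α {x : ℝ | MemI a b x})
    (hD : ∀ x : ℝ, MemI a b x → HasDerivAlpha f α x (D x))
    (hbdd : ∀ s t : ℝ, MemI a b s → MemI a b t →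
      ∃ M : ℝ, ∀ x ∈ Icc s t, |D x| ≤ M) :
    (∀ s t : ℝ, MemI a b s → MemI a b t → s < t →
      ∃ M : ℝ, 0 < M ∧ ∀ x y : ℝ, s ≤ x → x < y → y ≤ t →
        |leftLim f y - rightLim f x| ≤ M * (leftLim α y - rightLim α x)) ∧
    LocallyBoundedVariationOn (leftLim f) {x : ℝ | MemI a b x} := by
  set S := {x : ℝ | MemI a b x} with hSdef
  have hSopen : IsOpen S := by
    have : S = (fun x : ℝ => (x : EReal)) ⁻¹' (Ioo a b) := rfl
    rw [this]
    exact isOpen_Ioo.preimage continuous_coe_real_ereal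
  have hmemIcc : ∀ {s t : ℝ}, MemI a b s → MemI a b t → ∀ u ∈ Icc s t, u ∈ S := by
    intro s t hs ht u hu
    exact ⟨lt_of_lt_of_le hs.1 (EReal.coe_le_coe_iff.2 hu.1),
      lt_of_le_of_lt (EReal.coe_le_coe_iff.2 hu.2) ht.2⟩
  have hfreg : ∀ w ∈ S, (∃ L, Tendsto f (𝓝[<] w) (𝓝 L)) ∧ ∃ R, Tendsto f (𝓝[>] w) (𝓝 R) :=
    fun w hw => hf w hw
  have hαreg : ∀ w ∈ S, (∃ L, Tendsto α (𝓝[<] w) (𝓝 L)) ∧ ∃ R, Tendsto α (𝓝[>] w) (𝓝 R) := by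
    intro z hz
    obtain ⟨ε, hε, hball⟩ := Metric.isOpen_iff.1 hSopen z hz
    have hcd : Icc (z - ε/2) (z + ε/2) ⊆ S := by
      intro w hw
      apply hball
      rw [Metric.mem_ball, Real.dist_eq, abs_lt]
      constructor
      · linarith [hw.1]
      · linarith [hw.2]
    set β : ℝ → ℝ := fun w => α (max (z - ε/2) (min (z + ε/2) w)) with hβdef
    have hm : ∀ w, max (z - ε/2) (min (z + ε/2) w) ∈ Icc (z - ε/2) (z + ε/2) :=
      fun w => ⟨le_max_left _ _, max_le (by linarith) (min_le_left _ _)⟩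
    have hβ : Monotone β := by
      intro w₁ w₂ hw
      exact hα.monotoneOn (hcd (hm w₁)) (hcd (hm w₂))
        (max_le_max (le_refl _) (min_le_min (le_refl _) hw))
    constructor
    · refine ⟨leftLim β z, Tendsto.congr' ?_ (hβ.tendsto_leftLim z)⟩
      filter_upwards [Ioo_mem_nhdsLT_of_mem (⟨by linarith, le_refl z⟩ : z ∈ Ioc (z - ε/2) z)] with w hw
      show β w = α w
      rw [hβdef]
      simp only
      rw [min_eq_right (by linarith [hw.2] : w ≤ z + ε/2), max_eq_right hw.1.le]
    · refine ⟨rightLim β z, Tendsto.congr' ?_ (hβ.tendsto_rightLim z)⟩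
      filter_upwards [Ioo_mem_nhdsGT_of_mem (⟨le_refl z, by linarith⟩ : z ∈ Ico z (z + ε/2))] with w hw
      show β w = α w
      rw [hβdef]
      simp only
      rw [min_eq_right hw.2.le, max_eq_right (by linarith [hw.1])]
  -- main estimate
  have Hmain : ∀ s t : ℝ, MemI a b s → MemI a b t → s < t →
      ∃ M : ℝ, 0 < M ∧
        (∀ x y : ℝ, s ≤ x → x < y → y ≤ t →
          |leftLim f y - rightLim f x| ≤ M * (leftLim α y - rightLim α x)) ∧
        (∀ z ∈ Icc s t, |rightLim f z - leftLim f z| ≤ M * (rightLim α z - leftLim α z)) := by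
    intro s t hs ht hst
    obtain ⟨M₀, hM₀⟩ := hbdd s t hs ht
    set M := max M₀ 0 + 1 with hMdef
    have hMpos : 0 < M := by
      have := le_max_right M₀ 0; rw [hMdef]; linarith
    have hMD : ∀ c ∈ Icc s t, |D c| < M :=
      fun c hc => lt_of_le_of_lt ((hM₀ c hc).trans (le_max_left _ _)) (lt_add_one _)
    have hIccS : ∀ u ∈ Icc s t, u ∈ S := hmemIcc hs ht
    -- eventual symmetric bound
    have evb : ∀ c ∈ Icc s t, ∀ᶠ h in 𝓝[>] (0:ℝ),
        0 < leftLim α (c + h) - rightLim α (c - h) ∧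
        |leftLim f (c + h) - rightLim f (c - h)| ≤ M * (leftLim α (c + h) - rightLim α (c - h)) := by
      intro c hc
      have hcS : c ∈ S := hIccS c hc
      obtain ⟨ε, hε, hball⟩ := Metric.isOpen_iff.1 hSopen c hcS
      have hQ : ∀ᶠ h in 𝓝[>] (0:ℝ),
          |(leftLim f (c + h) - rightLim f (c - h)) / (leftLim α (c + h) - rightLim α (c - h))| < M :=
        (hD c hcS).eventually
          (((isOpen_lt continuous_abs continuous_const).eventually_mem (hMD c hc)).mono fun y hy => hy)
      filter_upwards [hQ, Ioo_mem_nhdsGT_of_mem (⟨le_refl (0:ℝ), half_pos hε⟩ : (0:ℝ) ∈ Ico 0 (ε/2))]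
        with h hQh hh
      obtain ⟨hh0, hhε⟩ := hh
      have hsub : ∀ w ∈ Icc (c - h) (c + h), w ∈ S := by
        intro w hw
        apply hball
        rw [Metric.mem_ball, Real.dist_eq, abs_lt]
        constructor
        · linarith [hw.1]
        · linarith [hw.2]
      have hc1 : rightLim α (c - h) ≤ α c := by
        obtain ⟨R, hR⟩ := (hαreg (c - h) (hsub _ ⟨le_refl _, by linarith⟩)).2
        have hnb : (𝓝[>] (c - h)).NeBot := inferInstance
        rw [rightLim_eq_of_tendsto hR]
        refine le_of_tendsto hR ?_
        filter_upwards [Ioo_mem_nhdsGT_of_mem (⟨le_refl (c - h), by linarith⟩ : (c - h) ∈ Ico (c - h) c)]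
          with w hw
        exact hα.monotoneOn (hsub w ⟨hw.1.le, by linarith [hw.2]⟩) hcS hw.2.le
      have hc2 : α c < α (c + h/2) := hα hcS (hsub _ ⟨by linarith, by linarith⟩) (by linarith)
      have hc3 : α (c + h/2) ≤ leftLim α (c + h) := by
        obtain ⟨L, hL⟩ := (hαreg (c + h) (hsub _ ⟨by linarith, le_refl _⟩)).1
        have hnb : (𝓝[<] (c + h)).NeBot := inferInstance
        rw [leftLim_eq_of_tendsto hL]
        refine ge_of_tendsto hL ?_
        filter_upwards [Ioo_mem_nhdsLT_of_mem (⟨by linarith, le_refl _⟩ : (c + h) ∈ Ioc (c + h/2) (c + h))]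
          with w hw
        exact hα.monotoneOn (hsub _ ⟨by linarith, by linarith⟩)
          (hsub w ⟨by linarith [hw.1], hw.2.le⟩) hw.1.le
      have hden : 0 < leftLim α (c + h) - rightLim α (c - h) := by linarith
      refine ⟨hden, ?_⟩
      have heq : leftLim f (c + h) - rightLim f (c - h) =
          (leftLim f (c + h) - rightLim f (c - h)) / (leftLim α (c + h) - rightLim α (c - h)) *
            (leftLim α (c + h) - rightLim α (c - h)) := (div_mul_cancel₀ _ hden.ne').symm
      rw [heq, abs_mul, abs_of_pos hden]
      exact mul_le_mul_of_nonneg_right hQh.le hden.le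
    -- jump bound
    have jump : ∀ z ∈ Icc s t, |rightLim f z - leftLim f z| ≤ M * (rightLim α z - leftLim α z) := by
      intro z hz
      have hzS : z ∈ S := hIccS z hz
      have l1 : Tendsto (fun h : ℝ => leftLim f (z + h)) (𝓝[>] (0:ℝ)) (𝓝 (rightLim f z)) :=
        (tC f S hSopen z hzS hfreg).comp (shiftR z)
      have l2 : Tendsto (fun h : ℝ => rightLim f (z - h)) (𝓝[>] (0:ℝ)) (𝓝 (leftLim f z)) :=
        (tA f S hSopen z hzS hfreg).comp (shiftL z)
      have l3 : Tendsto (fun h : ℝ => leftLim α (z + h)) (𝓝[>] (0:ℝ)) (𝓝 (rightLim α z)) :=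
        (tC α S hSopen z hzS hαreg).comp (shiftR z)
      have l4 : Tendsto (fun h : ℝ => rightLim α (z - h)) (𝓝[>] (0:ℝ)) (𝓝 (leftLim α z)) :=
        (tA α S hSopen z hzS hαreg).comp (shiftL z)
      have l5 : Tendsto (fun h : ℝ =>
          M * (leftLim α (z + h) - rightLim α (z - h)) -
            |leftLim f (z + h) - rightLim f (z - h)|) (𝓝[>] (0:ℝ))
          (𝓝 (M * (rightLim α z - leftLim α z) - |rightLim f z - leftLim f z|)) :=
        ((l3.sub l4).const_mul M).sub (l1.sub l2).abs
      have h0 : 0 ≤ M * (rightLim α z - leftLim α z) - |rightLim f z - leftLim f z| := by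
        refine ge_of_tendsto l5 ?_
        filter_upwards [evb z hz] with h hh
        linarith [hh.2]
      linarith
    refine ⟨M, hMpos, ?_, jump⟩
    intro x y hx hxy hy
    have hIccxy : ∀ u ∈ Icc x y, u ∈ Icc s t := fun u hu => ⟨hx.trans hu.1, hu.2.trans hy⟩
    have hi1 : ∀ z ∈ Ioc x y, z ∈ S := fun z hz => hIccS z (hIccxy z ⟨hz.1.le, hz.2⟩)
    have k1 : M * rightLim α x - rightLim f x ≤ M * leftLim α y - leftLim f y := by
      refine key (fun z => M * rightLim α z - rightLim f z)
        (fun z => M * leftLim α z - leftLim f z) x y hxy ?_ ?_ ?_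
      · intro z hz
        have hzS : z ∈ S := hi1 z hz
        exact ((tA α S hSopen z hzS hαreg).const_mul M).sub (tA f S hSopen z hzS hfreg)
      · intro z hz
        have hzS : z ∈ S := hIccS z (hIccxy z ⟨hz.1, hz.2.le⟩)
        exact ((tB α S hSopen z hzS hαreg).const_mul M).sub (tB f S hSopen z hzS hfreg)
      · intro c hc
        filter_upwards [evb c (hIccxy c hc)] with h hh
        have h2 := (abs_le.1 hh.2).2
        rw [mul_sub] at h2
        show M * rightLim α (c - h) - rightLim f (c - h) ≤ M * leftLim α (c + h) - leftLim f (c + h)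
        linarith
    have k2 : M * rightLim α x + rightLim f x ≤ M * leftLim α y + leftLim f y := by
      refine key (fun z => M * rightLim α z + rightLim f z)
        (fun z => M * leftLim α z + leftLim f z) x y hxy ?_ ?_ ?_
      · intro z hz
        have hzS : z ∈ S := hi1 z hz
        exact ((tA α S hSopen z hzS hαreg).const_mul M).add (tA f S hSopen z hzS hfreg)
      · intro z hz
        have hzS : z ∈ S := hIccS z (hIccxy z ⟨hz.1, hz.2.le⟩)
        exact ((tB α S hSopen z hzS hαreg).const_mul M).add (tB f S hSopen z hzS hfreg)
      · intro c hc
        filter_upwards [evb c (hIccxy c hc)] with h hh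
        have h2 := (abs_le.1 hh.2).1
        rw [mul_sub] at h2
        show M * rightLim α (c - h) + rightLim f (c - h) ≤ M * leftLim α (c + h) + leftLim f (c + h)
        linarith
    rw [abs_le]
    constructor
    · rw [mul_sub]; linarith
    · rw [mul_sub]; linarith
  refine ⟨fun s t hs ht hst => (Hmain s t hs ht hst).imp fun M h => ⟨h.1, h.2.1⟩, ?_⟩
  intro x y hx hy
  rcases lt_or_ge x y with hxy | hyx
  · obtain ⟨M, hMpos, pairs, jmp⟩ := Hmain x y hx hy hxy
    refine bv_aux (leftLim f) (leftLim α) M (S ∩ Icc x y) x y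
      ⟨hx, le_refl x, hxy.le⟩ ⟨hy, hxy.le, le_refl y⟩ (fun u hu => ⟨hu.2.1, hu.2.2⟩) ?_
    intro u hu v hv huv
    rcases eq_or_lt_of_le huv with rfl | hlt
    · simp
    · have p1 := pairs u v hu.2.1 hlt hv.2.2
      have p2 := jmp u hu.2
      have habs : |leftLim f v - leftLim f u| ≤
          |leftLim f v - rightLim f u| + |rightLim f u - leftLim f u| :=
        abs_sub_le _ _ _
      rw [mul_sub] at p1 p2 ⊢
      linarith
  · have hsub : (S ∩ Icc x y).Subsingleton := by
      intro p hp q hq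
      have := hp.2; have := hq.2
      exact le_antisymm (hp.2.2.trans (hyx.trans hq.2.1)) (hq.2.2.trans (hyx.trans hp.2.1))
    have h0 := eVariationOn.subsingleton (leftLim f) hsub
    unfold BoundedVariationOn
    rw [h0]
    exact ENNReal.zero_ne_top
end

section
/- L'Hospital's rule via Lebesgue–Stieltjes integrals (∞ case): Let α be strictly increasing on (a,b) and let u, v be locally dα-integrable on (a,b) with v > 0 dα-almost everywhere (or v < 0 dα-a.e.). Suppose there is w : (a,b) → ℝ with w = u/v dα-a.e. and lim_{x↑b} w(x) = A ∈ [-∞,∞]. Fix r ∈ (a,b). If ∫_{(r,b)} v dα = +∞ or -∞, then lim_{x↑b} (∫_{(r,x)} u dα) / (∫_{(r,x)} v dα) = A. -/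
open Filter Topology Function Set MeasureTheory

lemma eventually_leftFilter_iff {b : EReal} {r : ℝ} (hrb : (r : EReal) < b) {P : ℝ → Prop} :
    (∀ᶠ x in leftFilter b, P x) ↔
      ∃ c : ℝ, r < c ∧ (c : EReal) < b ∧ ∀ x : ℝ, c < x → (x : EReal) < b → P x := by
  constructor
  · rintro ⟨s, hs, hsub⟩
    rw [mem_nhdsLT_iff_exists_Ioo_subset' hrb] at hs
    obtain ⟨l, hl, hls⟩ := hs
    obtain ⟨c, hc1, hc2⟩ := EReal.exists_between_coe_real (max_lt hl hrb : max l (r:EReal) < b)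
    refine ⟨c, ?_, hc2, fun x hcx hxb => ?_⟩
    · have := lt_of_le_of_lt (le_max_right l (r:EReal)) hc1
      exact_mod_cast this
    · refine hsub (hls ⟨?_, hxb⟩)
      calc l ≤ max l (r:EReal) := le_max_left _ _
        _ < (c : EReal) := hc1
        _ < (x : EReal) := by exact_mod_cast hcx
  · rintro ⟨c, _, hcb, hP⟩
    refine ⟨Ioo (c : EReal) b, Ioo_mem_nhdsLT hcb, fun x hx => ?_⟩
    exact hP x (by exact_mod_cast show (c:EReal) < x from hx.1) hx.2

lemma leftFilter_neBot_s19 {b : EReal} {r : ℝ} (hrb : (r : EReal) < b) : (leftFilter b).NeBot := by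
  rw [leftFilter, comap_neBot_iff]
  intro t ht
  rw [mem_nhdsLT_iff_exists_Ioo_subset' hrb] at ht
  obtain ⟨l, hl, hls⟩ := ht
  obtain ⟨c, hc1, hc2⟩ := EReal.exists_between_coe_real (max_lt hl hrb : max l (r:EReal) < b)
  exact ⟨c, hls ⟨lt_of_le_of_lt (le_max_left _ _) hc1, hc2⟩⟩

lemma exists_seq_lt (b : EReal) (r : ℝ) (hrb : (r : EReal) < b) :
    ∃ x : ℕ → ℝ, (∀ n, r < x n ∧ (x n : EReal) < b) ∧
      ∀ y : ℝ, (y : EReal) < b → ∀ᶠ n in atTop, y < x n := by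
  induction b with
  | bot => exact absurd hrb (by simp)
  | coe b' =>
      have hrb' : r < b' := by exact_mod_cast hrb
      obtain ⟨t, _, ht_lt, ht_tend⟩ := exists_seq_strictMono_tendsto b'
      refine ⟨fun n => max (t n) ((r + b') / 2), fun n => ⟨?_, ?_⟩, fun y hyb => ?_⟩
      · exact lt_of_lt_of_le (by linarith) (le_max_right _ _)
      · exact_mod_cast max_lt (ht_lt n) (by linarith)
      · have hy : y < b' := by exact_mod_cast hyb
        filter_upwards [ht_tend.eventually_const_lt hy] with n hn
        exact lt_of_lt_of_le hn (le_max_left _ _)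
  | top =>
      refine ⟨fun n => max r 0 + n + 1, fun n => ⟨?_, by exact_mod_cast EReal.coe_lt_top _⟩,
        fun y _ => ?_⟩
      · show r < max r 0 + (n:ℝ) + 1
        have : (0:ℝ) ≤ (n:ℝ) := Nat.cast_nonneg n
        have := le_max_left r 0
        linarith
      · obtain ⟨N, hN⟩ := exists_nat_gt (y - max r 0 - 1)
        filter_upwards [eventually_ge_atTop N] with n hn
        show y < max r 0 + (n:ℝ) + 1
        have : (N:ℝ) ≤ (n:ℝ) := Nat.cast_le.2 hn
        linarith

lemma lhopital_pos (a b : EReal) (u v w : ℝ → ℝ) (A : EReal) (μ : Measure ℝ)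
    (hu : ∀ s t : ℝ, MemI a b s → MemI a b t → IntegrableOn u (Ioo s t) μ)
    (hv : ∀ s t : ℝ, MemI a b s → MemI a b t → IntegrableOn v (Ioo s t) μ)
    (hpos : ∀ᵐ x ∂(μ.restrict {x : ℝ | MemI a b x}), 0 < v x)
    (hw : ∀ᵐ x ∂(μ.restrict {x : ℝ | MemI a b x}), w x = u x / v x)
    (hwlim : Tendsto (fun x : ℝ => ((w x : ℝ) : EReal)) (leftFilter b) (𝓝 A))
    (r : ℝ) (hr : MemI a b r)
    (hinf : ¬ IntegrableOn v {x : ℝ | r < x ∧ (x : EReal) < b} μ) :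
    Tendsto (fun x : ℝ =>
        (((∫ y in Ioo r x, u y ∂μ) / (∫ y in Ioo r x, v y ∂μ) : ℝ) : EReal))
      (leftFilter b) (𝓝 A) := by
  have hrb : (r : EReal) < b := hr.2
  haveI : (leftFilter b).NeBot := leftFilter_neBot_s19 hrb
  set S := {x : ℝ | MemI a b x} with hS
  set U : ℝ → ℝ := fun x => ∫ y in Ioo r x, u y ∂μ with hUdef
  set V : ℝ → ℝ := fun x => ∫ y in Ioo r x, v y ∂μ with hVdef
  -- subsets of S
  have hsubS : ∀ {s t : ℝ}, r ≤ s → (t : EReal) < b → Ioo s t ⊆ S := by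
    intro s t hs ht y hy
    refine ⟨lt_trans hr.1 ?_, lt_trans ?_ ht⟩
    · exact_mod_cast lt_of_le_of_lt hs hy.1
    · exact_mod_cast hy.2
  -- integrability
  have hIu : ∀ {s t : ℝ}, r ≤ s → (t : EReal) < b → IntegrableOn u (Ioo s t) μ := by
    intro s t hs ht
    rcases lt_or_ge s t with h | h
    · exact hu s t ⟨lt_of_lt_of_le hr.1 (EReal.coe_le_coe_iff.2 hs),
          lt_trans (EReal.coe_lt_coe_iff.2 h) ht⟩
        ⟨lt_trans (lt_of_lt_of_le hr.1 (EReal.coe_le_coe_iff.2 hs))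
          (EReal.coe_lt_coe_iff.2 h), ht⟩
    · rw [Set.Ioo_eq_empty (not_lt.2 h)]; exact integrableOn_empty
  have hIv : ∀ {s t : ℝ}, r ≤ s → (t : EReal) < b → IntegrableOn v (Ioo s t) μ := by
    intro s t hs ht
    rcases lt_or_ge s t with h | h
    · exact hv s t ⟨lt_of_lt_of_le hr.1 (EReal.coe_le_coe_iff.2 hs),
          lt_trans (EReal.coe_lt_coe_iff.2 h) ht⟩
        ⟨lt_trans (lt_of_lt_of_le hr.1 (EReal.coe_le_coe_iff.2 hs))
          (EReal.coe_lt_coe_iff.2 h), ht⟩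
    · rw [Set.Ioo_eq_empty (not_lt.2 h)]; exact integrableOn_empty
  -- a.e. facts on subintervals
  have hposI : ∀ {s t : ℝ}, r ≤ s → (t : EReal) < b →
      ∀ᵐ y ∂(μ.restrict (Ioo s t)), 0 < v y :=
    fun hs ht => ae_restrict_of_ae_restrict_of_subset (hsubS hs ht) hpos
  have hwI : ∀ {s t : ℝ}, r ≤ s → (t : EReal) < b →
      ∀ᵐ y ∂(μ.restrict (Ioo s t)), w y = u y / v y :=
    fun hs ht => ae_restrict_of_ae_restrict_of_subset (hsubS hs ht) hw
  have huvI : ∀ {s t : ℝ}, r ≤ s → (t : EReal) < b →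
      ∀ᵐ y ∂(μ.restrict (Ioo s t)), u y = w y * v y := by
    intro s t hs ht
    filter_upwards [hposI hs ht, hwI hs ht] with y h1 h2
    rw [h2]
    exact (div_mul_cancel₀ (u y) h1.ne').symm
  -- monotonicity of V
  have hVmono : ∀ {s t : ℝ}, s ≤ t → (t : EReal) < b → V s ≤ V t := by
    intro s t hst htb
    exact setIntegral_mono_set (hIv le_rfl htb) ((hposI le_rfl htb).mono fun y h => h.le)
      (Set.Ioo_subset_Ioo_right hst).eventuallyLE
  -- additivity
  have hadd : ∀ (f : ℝ → ℝ), (∀ {s t : ℝ}, r ≤ s → (t : EReal) < b → IntegrableOn f (Ioo s t) μ) →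
      ∀ {c x : ℝ}, r < c → c < x → (x : EReal) < b →
      ∫ y in Ioo r x, f y ∂μ = (∫ y in Ioc r c, f y ∂μ) + ∫ y in Ioo c x, f y ∂μ := by
    intro f hIf c x hrc hcx hxb
    have hdisj : Disjoint (Ioc r c) (Ioo c x) := by
      rw [Set.disjoint_left]
      rintro y ⟨_, h2⟩ ⟨h3, _⟩
      exact absurd h3 (not_lt.2 h2)
    have h1 : IntegrableOn f (Ioc r c) μ :=
      (hIf le_rfl hxb).mono_set (fun y hy => ⟨hy.1, lt_of_le_of_lt hy.2 hcx⟩)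
    rw [← Set.Ioc_union_Ioo_eq_Ioo hrc.le hcx,
      setIntegral_union hdisj measurableSet_Ioo h1 (hIf hrc.le hxb)]
  -- comparison lemmas
  have hcomp_lower : ∀ (m : ℝ) {c : ℝ}, r < c → (c : EReal) < b →
      (∀ x : ℝ, c < x → (x : EReal) < b → m ≤ w x) →
      ∃ K : ℝ, ∀ x : ℝ, c < x → (x : EReal) < b → m * V x + K ≤ U x := by
    intro m c hrc hcb hwge
    refine ⟨(∫ y in Ioc r c, u y ∂μ) - m * ∫ y in Ioc r c, v y ∂μ, fun x hcx hxb => ?_⟩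
    have h1 : U x = (∫ y in Ioc r c, u y ∂μ) + ∫ y in Ioo c x, u y ∂μ := hadd u hIu hrc hcx hxb
    have h2 : V x = (∫ y in Ioc r c, v y ∂μ) + ∫ y in Ioo c x, v y ∂μ := hadd v hIv hrc hcx hxb
    have key : m * ∫ y in Ioo c x, v y ∂μ ≤ ∫ y in Ioo c x, u y ∂μ := by
      rw [← MeasureTheory.integral_const_mul]
      refine integral_mono_ae ((hIv hrc.le hxb).const_mul m) (hIu hrc.le hxb) ?_
      filter_upwards [hposI hrc.le hxb, huvI hrc.le hxb,
        ae_restrict_mem measurableSet_Ioo] with y hy1 hy2 hy3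
      rw [hy2]
      exact mul_le_mul_of_nonneg_right
        (hwge y hy3.1 (lt_trans (by exact_mod_cast hy3.2) hxb)) hy1.le
    calc m * V x + ((∫ y in Ioc r c, u y ∂μ) - m * ∫ y in Ioc r c, v y ∂μ)
        = (∫ y in Ioc r c, u y ∂μ) + m * ∫ y in Ioo c x, v y ∂μ := by rw [h2]; ring
      _ ≤ (∫ y in Ioc r c, u y ∂μ) + ∫ y in Ioo c x, u y ∂μ := by linarith [key]
      _ = U x := h1.symm
  have hcomp_upper : ∀ (m : ℝ) {c : ℝ}, r < c → (c : EReal) < b →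
      (∀ x : ℝ, c < x → (x : EReal) < b → w x ≤ m) →
      ∃ K : ℝ, ∀ x : ℝ, c < x → (x : EReal) < b → U x ≤ m * V x + K := by
    intro m c hrc hcb hwle
    refine ⟨(∫ y in Ioc r c, u y ∂μ) - m * ∫ y in Ioc r c, v y ∂μ, fun x hcx hxb => ?_⟩
    have h1 : U x = (∫ y in Ioc r c, u y ∂μ) + ∫ y in Ioo c x, u y ∂μ := hadd u hIu hrc hcx hxb
    have h2 : V x = (∫ y in Ioc r c, v y ∂μ) + ∫ y in Ioo c x, v y ∂μ := hadd v hIv hrc hcx hxb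
    have key : (∫ y in Ioo c x, u y ∂μ) ≤ m * ∫ y in Ioo c x, v y ∂μ := by
      rw [← MeasureTheory.integral_const_mul]
      refine integral_mono_ae (hIu hrc.le hxb) ((hIv hrc.le hxb).const_mul m) ?_
      filter_upwards [hposI hrc.le hxb, huvI hrc.le hxb,
        ae_restrict_mem measurableSet_Ioo] with y hy1 hy2 hy3
      rw [hy2]
      exact mul_le_mul_of_nonneg_right
        (hwle y hy3.1 (lt_trans (by exact_mod_cast hy3.2) hxb)) hy1.le
    calc U x = (∫ y in Ioc r c, u y ∂μ) + ∫ y in Ioo c x, u y ∂μ := h1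
      _ ≤ (∫ y in Ioc r c, u y ∂μ) + m * ∫ y in Ioo c x, v y ∂μ := by linarith [key]
      _ = m * V x + ((∫ y in Ioc r c, u y ∂μ) - m * ∫ y in Ioc r c, v y ∂μ) := by rw [h2]; ring
  -- V tends to infinity
  have hVtop : Tendsto V (leftFilter b) atTop := by
    rw [tendsto_atTop]
    intro M
    have hex : ∃ x0 : ℝ, r < x0 ∧ (x0 : EReal) < b ∧ M ≤ V x0 := by
      by_contra hcon
      push_neg at hcon
      apply hinf
      obtain ⟨xs, hxs1, hxs2⟩ := exists_seq_lt b r hrb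
      set T := {x : ℝ | r < x ∧ (x : EReal) < b} with hT
      have hTmeas : MeasurableSet T := by
        have : T = Ioi r ∩ ((fun x : ℝ => (x : EReal)) ⁻¹' Iio b) := rfl
        rw [this]
        exact measurableSet_Ioi.inter (measurable_coe_real_ereal measurableSet_Iio)
      have hTS : T ⊆ S := fun y hy => ⟨lt_trans hr.1 (by exact_mod_cast hy.1), hy.2⟩
      have hrestr : ∀ n, (μ.restrict T).restrict (Ioo r (xs n)) = μ.restrict (Ioo r (xs n)) := by
        intro n
        rw [Measure.restrict_restrict measurableSet_Ioo, Set.inter_eq_left.2]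
        intro y hy
        exact ⟨hy.1, lt_trans (by exact_mod_cast hy.2) (hxs1 n).2⟩
      have hcov : AECover (μ.restrict T) atTop (fun n => Ioo r (xs n)) := by
        refine ⟨?_, fun n => measurableSet_Ioo⟩
        filter_upwards [ae_restrict_mem hTmeas] with y hy
        filter_upwards [hxs2 y hy.2] with n hn
        exact ⟨hy.1, hn⟩
      refine hcov.integrable_of_integral_bounded_of_nonneg_ae M (fun n => ?_) ?_ ?_
      · rw [IntegrableOn, hrestr n]
        exact hIv le_rfl (hxs1 n).2
      · exact (ae_restrict_of_ae_restrict_of_subset hTS hpos).mono fun y h => h.le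
      · refine Filter.Eventually.of_forall fun n => ?_
        rw [hrestr n]
        exact (hcon (xs n) (hxs1 n).1 (hxs1 n).2).le
    obtain ⟨x0, hx0r, hx0b, hx0⟩ := hex
    rw [eventually_leftFilter_iff hrb]
    exact ⟨x0, hx0r, hx0b, fun x hx hxb => le_trans hx0 (hVmono hx.le hxb)⟩
  -- conclude via order topology
  refine tendsto_order.2 ⟨fun l hl => ?_, fun l hl => ?_⟩
  · obtain ⟨z, hz1, hz2⟩ := EReal.exists_between_coe_real hl
    obtain ⟨m, hm1, hm2⟩ := EReal.exists_between_coe_real hz2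
    have hzm : z < m := by exact_mod_cast hm1
    have hwev : ∀ᶠ x in leftFilter b, (m : EReal) < ((w x : ℝ) : EReal) :=
      (tendsto_order.1 hwlim).1 _ hm2
    rw [eventually_leftFilter_iff hrb] at hwev
    obtain ⟨c, hc1, hc2, hc3⟩ := hwev
    obtain ⟨K, hK⟩ := hcomp_lower m hc1 hc2
      (fun x h1 h2 => (by exact_mod_cast (hc3 x h1 h2) : m < w x).le)
    have hVlarge := hVtop.eventually (eventually_ge_atTop (max 1 ((|K| + 1) / (m - z))))
    have hev : ∀ᶠ x in leftFilter b, c < x ∧ (x : EReal) < b :=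
      (eventually_leftFilter_iff hrb).2 ⟨c, hc1, hc2, fun x h1 h2 => ⟨h1, h2⟩⟩
    filter_upwards [hVlarge, hev] with x hVx hx
    obtain ⟨hcx, hxb⟩ := hx
    have hVpos : (0:ℝ) < V x := lt_of_lt_of_le zero_lt_one (le_trans (le_max_left _ _) hVx)
    have hUK : m * V x + K ≤ U x := hK x hcx hxb
    have hmz : (0:ℝ) < m - z := by linarith
    have habs : |K| + 1 ≤ V x * (m - z) :=
      (div_le_iff₀ hmz).1 (le_trans (le_max_right _ _) hVx)
    have hKabs : -|K| ≤ K := neg_abs_le K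
    have hgoal : z < U x / V x := by
      rw [lt_div_iff₀ hVpos]
      nlinarith
    exact lt_trans hz1 (by exact_mod_cast hgoal)
  · obtain ⟨z, hz1, hz2⟩ := EReal.exists_between_coe_real hl
    obtain ⟨m, hm1, hm2⟩ := EReal.exists_between_coe_real hz1
    have hzm : m < z := by exact_mod_cast hm2
    have hwev : ∀ᶠ x in leftFilter b, ((w x : ℝ) : EReal) < (m : EReal) :=
      (tendsto_order.1 hwlim).2 _ hm1
    rw [eventually_leftFilter_iff hrb] at hwev
    obtain ⟨c, hc1, hc2, hc3⟩ := hwev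
    obtain ⟨K, hK⟩ := hcomp_upper m hc1 hc2
      (fun x h1 h2 => (by exact_mod_cast (hc3 x h1 h2) : w x < m).le)
    have hVlarge := hVtop.eventually (eventually_ge_atTop (max 1 ((|K| + 1) / (z - m))))
    have hev : ∀ᶠ x in leftFilter b, c < x ∧ (x : EReal) < b :=
      (eventually_leftFilter_iff hrb).2 ⟨c, hc1, hc2, fun x h1 h2 => ⟨h1, h2⟩⟩
    filter_upwards [hVlarge, hev] with x hVx hx
    obtain ⟨hcx, hxb⟩ := hx
    have hVpos : (0:ℝ) < V x := lt_of_lt_of_le zero_lt_one (le_trans (le_max_left _ _) hVx)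
    have hUK : U x ≤ m * V x + K := hK x hcx hxb
    have hmz : (0:ℝ) < z - m := by linarith
    have habs : |K| + 1 ≤ V x * (z - m) :=
      (div_le_iff₀ hmz).1 (le_trans (le_max_right _ _) hVx)
    have hKabs : K ≤ |K| := le_abs_self K
    have hgoal : U x / V x < z := by
      rw [div_lt_iff₀ hVpos]
      nlinarith
    exact lt_trans (by exact_mod_cast hgoal) hz2


/-- L'Hospital's rule via Lebesgue–Stieltjes integrals, `∞` case. -/
theorem stmt19 (a b : EReal) (hab : a < b) (α u v w : ℝ → ℝ) (A : EReal)
    (μ : Measure ℝ)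
    (hα : StrictMonoOn α {x : ℝ | MemI a b x})
    (hμ : ∀ s t : ℝ, MemI a b s → MemI a b t → s < t →
      μ (Ioo s t) = ENNReal.ofReal (leftLim α t - rightLim α s))
    (hu : ∀ s t : ℝ, MemI a b s → MemI a b t → IntegrableOn u (Ioo s t) μ)
    (hv : ∀ s t : ℝ, MemI a b s → MemI a b t → IntegrableOn v (Ioo s t) μ)
    (hsign : (∀ᵐ x ∂(μ.restrict {x : ℝ | MemI a b x}), 0 < v x) ∨
             (∀ᵐ x ∂(μ.restrict {x : ℝ | MemI a b x}), v x < 0))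
    (hw : ∀ᵐ x ∂(μ.restrict {x : ℝ | MemI a b x}), w x = u x / v x)
    (hwlim : Tendsto (fun x : ℝ => ((w x : ℝ) : EReal)) (leftFilter b) (𝓝 A))
    (r : ℝ) (hr : MemI a b r)
    (hinf : ¬ IntegrableOn v {x : ℝ | r < x ∧ (x : EReal) < b} μ) :
    Tendsto (fun x : ℝ =>
        (((∫ y in Ioo r x, u y ∂μ) / (∫ y in Ioo r x, v y ∂μ) : ℝ) : EReal))
      (leftFilter b) (𝓝 A) := by
  rcases hsign with hpos | hneg
  · exact lhopital_pos a b u v w A μ hu hv hpos hw hwlim r hr hinf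
  · have key := lhopital_pos a b (fun x => -u x) (fun x => -v x) w A μ
      (fun s t hs ht => (hu s t hs ht).neg) (fun s t hs ht => (hv s t hs ht).neg)
      (hneg.mono fun x h => by simpa using h)
      (hw.mono fun x h => by rw [h, neg_div_neg_eq])
      hwlim r hr (fun h => hinf (integrable_neg_iff.mp h))
    have : (fun x : ℝ =>
        (((∫ y in Ioo r x, (fun z => -u z) y ∂μ) / (∫ y in Ioo r x, (fun z => -v z) y ∂μ) : ℝ) :
          EReal)) = fun x : ℝ =>
        (((∫ y in Ioo r x, u y ∂μ) / (∫ y in Ioo r x, v y ∂μ) : ℝ) : EReal) := by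
      funext x
      rw [show (∫ y in Ioo r x, (fun z => -u z) y ∂μ) = -∫ y in Ioo r x, u y ∂μ from
        integral_neg u, show (∫ y in Ioo r x, (fun z => -v z) y ∂μ) = -∫ y in Ioo r x, v y ∂μ from
        integral_neg v, neg_div_neg_eq]
    rwa [this] at key
end
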